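/- arXiv:2005.07938 — 7 statements merged into one kernel-verified Lean document; each statement's English description precedes it below -/
import Mathlib

section
/- Let d ≥ 2 and 0 < δ ≤ 1. The Voronoi cell of the point δ·1 = (δ,…,δ) with respect to the design D(d,δ), namely {x ∈ [−1,1]^d : ‖x − δ·1‖ ≤ ‖x − z‖ for all z ∈ D(d,δ)}, equals the set C_0 ∪ ⋃_{j=1}^d U_j. -/
open MeasureTheory Filter

noncomputable section

/-- The cube `[-1,1]^d` in `ℝ^d`. -/
def cube (d : ℕ) : Set (EuclideanSpace ℝ (Fin d)) := {x | ∀ i, x i ∈ Set.Icc (-1 : ℝ) 1}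

/-- The constant vector `(c,…,c) ∈ ℝ^d`. -/
def const (d : ℕ) (c : ℝ) : EuclideanSpace ℝ (Fin d) := WithLp.toLp 2 (fun _ => c)

/-- The design `D(d,δ)`: the `2^{d-1}` points `δ·ε`, `ε` a sign vector with an even
number of `-1` entries. -/
def design (d : ℕ) (δ : ℝ) : Set (EuclideanSpace ℝ (Fin d)) :=
  {z | ∃ ε : Fin d → ℝ, (∀ i, ε i = 1 ∨ ε i = -1) ∧ Even {i | ε i = -1}.ncard ∧
        z = fun i => δ * ε i}

/-- `C_{d,z,ρ}`: fraction of the cube `[-1,1]^d` covered by the closed ball `B(z,ρ)`. -/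
def coverOne (d : ℕ) (z : EuclideanSpace ℝ (Fin d)) (ρ : ℝ) : ℝ :=
  (volume (cube d ∩ Metric.closedBall z ρ)).toReal / 2 ^ d

/-- `C_d(Z,r)`: fraction of the cube `[-1,1]^d` covered by the union of balls of
radius `r` centred at points of `Z`. -/
def cover (d : ℕ) (Z : Set (EuclideanSpace ℝ (Fin d))) (r : ℝ) : ℝ :=
  (volume (cube d ∩ ⋃ z ∈ Z, Metric.closedBall z r)).toReal / 2 ^ d

/-- Mean squared quantization error `θ(Z)`. -/
def quantErr (d : ℕ) (Z : Set (EuclideanSpace ℝ (Fin d))) : ℝ :=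
  (∫ x in cube d, ⨅ z : Z, ‖x - (z : EuclideanSpace ℝ (Fin d))‖ ^ 2) / 2 ^ d

/-- The cube `C_0 = [0,1]^d`. -/
def C0 (d : ℕ) : Set (EuclideanSpace ℝ (Fin d)) := {x | ∀ i, x i ∈ Set.Icc (0 : ℝ) 1}

/-- The set `U_j`. -/
def U (d : ℕ) (j : Fin d) : Set (EuclideanSpace ℝ (Fin d)) :=
  {x | -1 ≤ x j ∧ x j ≤ 0 ∧ ∀ k, k ≠ j → |x j| ≤ x k ∧ x k ≤ 1}


open Classical in
private lemma key {d : ℕ} {δ : ℝ} (hδ : 0 < δ) (x z : EuclideanSpace ℝ (Fin d)) (ε : Fin d → ℝ)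
    (hε : ∀ i, ε i = 1 ∨ ε i = -1) (hz : ∀ i, z i = δ * ε i) :
    ‖x - const d δ‖ ≤ ‖x - z‖ ↔
      0 ≤ ∑ i ∈ Finset.univ.filter (fun i => ε i = -1), x i := by
  have h1 : ‖x - const d δ‖ = Real.sqrt (∑ i, (x i - δ) ^ 2) := by
    rw [EuclideanSpace.norm_eq]
    congr 1; apply Finset.sum_congr rfl; intro i _
    simp [PiLp.sub_apply, Real.norm_eq_abs, sq_abs, const]
  have h2 : ‖x - z‖ = Real.sqrt (∑ i, (x i - δ * ε i) ^ 2) := by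
    rw [EuclideanSpace.norm_eq]
    congr 1; apply Finset.sum_congr rfl; intro i _
    simp [PiLp.sub_apply, Real.norm_eq_abs, sq_abs, hz i]
  rw [h1, h2, Real.sqrt_le_sqrt_iff (by positivity)]
  have hdiff : ∑ i, (x i - δ * ε i) ^ 2 - ∑ i, (x i - δ) ^ 2
      = 4 * δ * ∑ i ∈ Finset.univ.filter (fun i => ε i = -1), x i := by
    rw [← Finset.sum_sub_distrib, Finset.mul_sum, Finset.sum_filter]
    apply Finset.sum_congr rfl
    intro i _
    rcases hε i with h | h
    · rw [if_neg (by rw [h]; norm_num), h]; ring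
    · rw [if_pos h, h]; ring
  constructor
  · intro h
    have h4 : 0 ≤ 4 * δ * ∑ i ∈ Finset.univ.filter (fun i => ε i = -1), x i := by
      rw [← hdiff]; linarith
    nlinarith
  · intro h
    nlinarith [mul_nonneg (by linarith : (0:ℝ) ≤ 4 * δ) h]

open Classical in
theorem stmt1 (d : ℕ) (hd : 2 ≤ d) (δ : ℝ) (hδ0 : 0 < δ) (hδ1 : δ ≤ 1) :
    {x : EuclideanSpace ℝ (Fin d) |
        (∀ i, x i ∈ Set.Icc (-1 : ℝ) 1) ∧
        ∀ z ∈ design d δ, ‖x - const d δ‖ ≤ ‖x - z‖} =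
      C0 d ∪ ⋃ j, U d j := by
  ext x
  simp only [Set.mem_setOf_eq, Set.mem_union, Set.mem_iUnion]
  constructor
  · rintro ⟨hcube, hz⟩
    have hpair : ∀ a b : Fin d, a ≠ b → 0 ≤ x a + x b := by
      intro a b hab
      set ε : Fin d → ℝ := fun i => if i = a ∨ i = b then -1 else 1 with hεdef
      have hεval : ∀ i, ε i = 1 ∨ ε i = -1 := by
        intro i; by_cases h : i = a ∨ i = b <;> simp [hεdef, h]
      have hset : {i | ε i = -1} = {a, b} := by
        ext i
        simp only [Set.mem_setOf_eq, Set.mem_insert_iff, Set.mem_singleton_iff, hεdef]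
        by_cases h : i = a ∨ i = b <;> simp [h] <;> norm_num [h]
      have hmem : (WithLp.toLp 2 (fun i => δ * ε i) : EuclideanSpace ℝ (Fin d)) ∈ design d δ := by
        refine ⟨ε, hεval, ?_, rfl⟩
        rw [hset, Set.ncard_pair hab]
        exact even_two
      have hle := hz _ hmem
      rw [key hδ0 x _ ε hεval (fun i => rfl)] at hle
      have hfil : Finset.univ.filter (fun i => ε i = -1) = {a, b} := by
        ext i
        simp only [Finset.mem_filter, Finset.mem_univ, true_and, Finset.mem_insert,
          Finset.mem_singleton, hεdef]
        by_cases h : i = a ∨ i = b <;> simp [h] <;> norm_num [h]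
      rwa [hfil, Finset.sum_pair hab] at hle
    by_cases hneg : ∀ i, 0 ≤ x i
    · exact Or.inl (fun i => ⟨hneg i, (hcube i).2⟩)
    · push_neg at hneg
      obtain ⟨j, hj⟩ := hneg
      refine Or.inr ⟨j, (hcube j).1, le_of_lt hj, fun k hk => ⟨?_, (hcube k).2⟩⟩
      have := hpair j k (Ne.symm hk)
      rw [abs_of_neg hj]; linarith
  · intro h
    have hcube : ∀ i, x i ∈ Set.Icc (-1:ℝ) 1 := by
      intro i
      rcases h with hC | ⟨j, hU⟩
      · exact ⟨by linarith [(hC i).1], (hC i).2⟩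
      · by_cases hij : i = j
        · subst hij; exact ⟨hU.1, by linarith [hU.2.1]⟩
        · obtain ⟨h1, h2⟩ := hU.2.2 i hij
          exact ⟨by linarith [abs_nonneg (x j)], h2⟩
    refine ⟨hcube, ?_⟩
    rintro z ⟨ε, hε, heven, hzε⟩
    rw [key hδ0 x _ ε hε (fun i => congrFun hzε i)]
    set T := Finset.univ.filter (fun i => ε i = -1) with hTdef
    have hTcard : Even T.card := by
      have : {i | ε i = -1} = ↑T := by ext i; simp [hTdef]
      rwa [this, Set.ncard_coe_finset] at heven
    rcases h with hC | ⟨j, hU⟩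
    · exact Finset.sum_nonneg fun i _ => (hC i).1
    · by_cases hjT : j ∈ T
      · have hcard2 : 1 < T.card := by
          rcases Nat.lt_or_ge T.card 2 with h2 | h2
          · interval_cases hc : T.card
            · exact absurd (Finset.card_eq_zero.mp hc ▸ hjT) (Finset.notMem_empty j)
            · exact absurd hTcard (by decide)
          · exact h2
        obtain ⟨k, hkT, hkj⟩ := Finset.exists_mem_ne hcard2 j
        have hkTj : k ∈ T.erase j := Finset.mem_erase.mpr ⟨hkj, hkT⟩
        have hnn : ∀ i ∈ T.erase j, 0 ≤ x i := by
          intro i hi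
          have hij := (Finset.mem_erase.mp hi).1
          linarith [(hU.2.2 i hij).1, abs_nonneg (x j)]
        have hsum : x k ≤ ∑ i ∈ T.erase j, x i :=
          Finset.single_le_sum hnn hkTj
        have hxk : -x j ≤ x k := by
          have := (hU.2.2 k hkj).1
          rw [abs_of_nonpos hU.2.1] at this
          linarith
        rw [← Finset.add_sum_erase T x hjT]
        linarith
      · refine Finset.sum_nonneg fun i hi => ?_
        have hij : i ≠ j := fun he => hjT (he ▸ hi)
        linarith [(hU.2.2 i hij).1, abs_nonneg (x j)]

end
end

section
/- Let d ≥ 2 and 0 < δ ≤ 1. Then the mean squared quantization error of the design D(d,δ) satisfies θ(D(d,δ)) = d·(δ² − δ + 1/3) + 2δ/(d+1). -/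
open MeasureTheory Filter

noncomputable section

namespace QEAux

/-- sign function with value `1` at `0`. -/
def sgn (s : ℝ) : ℝ := if s < 0 then -1 else 1

lemma sgn_mem (s : ℝ) : sgn s = 1 ∨ sgn s = -1 := by
  unfold sgn; split <;> simp

lemma sgn_sq (s : ℝ) : sgn s ^ 2 = 1 := by
  unfold sgn; split <;> norm_num

lemma mul_sgn (s : ℝ) : s * sgn s = |s| := by
  unfold sgn; rcases lt_trichotomy s 0 with h | h | h
  · rw [if_pos h, abs_of_neg h]; ring
  · simp [h]
  · rw [if_neg (not_lt.2 h.le), abs_of_pos h]; ring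

lemma sgn_of_neg {s : ℝ} (h : s < 0) : sgn s = -1 := if_pos h

lemma sgn_of_nonneg {s : ℝ} (h : ¬ s < 0) : sgn s = 1 := if_neg h

lemma sgn_eq_neg_one_iff {s : ℝ} : sgn s = -1 ↔ s < 0 := by
  rcases lt_or_ge s 0 with h | h
  · rw [sgn_of_neg h]; simpa using h
  · rw [sgn_of_nonneg (not_lt.2 h)]
    constructor
    · intro h1; norm_num at h1
    · intro h1; linarith

lemma sgn_neg (s : ℝ) (hs : s ≠ 0) : sgn (-s) = - sgn s := by
  unfold sgn; rcases lt_trichotomy s 0 with h | h | h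
  · rw [if_neg (show ¬(-s) < 0 by linarith), if_pos h]; norm_num
  · exact absurd h hs
  · rw [if_pos (show -s < 0 by linarith), if_neg (show ¬s < 0 by linarith)]

variable {d : ℕ}

/-- minimum of the absolute values of the coordinates. -/
def mabs [NeZero d] (x : Fin d → ℝ) : ℝ :=
  Finset.univ.inf' Finset.univ_nonempty fun i => |x i|

lemma mabs_nonneg [NeZero d] (x : Fin d → ℝ) : 0 ≤ mabs x :=
  Finset.le_inf' _ _ fun i _ => abs_nonneg _

lemma mabs_le [NeZero d] (x : Fin d → ℝ) (i : Fin d) : mabs x ≤ |x i| :=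
  Finset.inf'_le _ (Finset.mem_univ i)

lemma le_mabs [NeZero d] (x : Fin d → ℝ) (t : ℝ) : t ≤ mabs x ↔ ∀ i, t ≤ |x i| := by
  rw [mabs, Finset.le_inf'_iff]; simp

/-- the negative-coordinate parity sign. -/
def psign [NeZero d] (x : Fin d → ℝ) : ℝ := ∏ i, sgn (x i)

lemma psign_eq [NeZero d] (x : Fin d → ℝ) :
    psign x = (-1 : ℝ) ^ (Finset.univ.filter fun i => x i < 0).card := by
  unfold psign sgn
  rw [Finset.prod_ite, Finset.prod_const, Finset.prod_const, one_pow, mul_one]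

/-- The main integrand. -/
def G [NeZero d] (δ : ℝ) (x : Fin d → ℝ) : ℝ :=
  (∑ i, (|x i| - δ) ^ 2) + 2 * δ * mabs x - 2 * δ * mabs x * psign x

lemma G_eq_if [NeZero d] (δ : ℝ) (x : Fin d → ℝ) :
    G δ x = (∑ i, (|x i| - δ) ^ 2) +
      (if Odd (Finset.univ.filter fun i => x i < 0).card then 4 * δ * mabs x else 0) := by
  rw [G, psign_eq]
  by_cases h : Odd (Finset.univ.filter fun i => x i < 0).card
  · rw [if_pos h, h.neg_one_pow]; ring
  · rw [if_neg h, (Nat.not_odd_iff_even.mp h).neg_one_pow]; ring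

/-- Pointwise identification of the infimum. -/
lemma iInf_design [NeZero d] (δ : ℝ) (hδ0 : 0 < δ) (x : EuclideanSpace ℝ (Fin d)) :
    (⨅ z : design d δ, ‖x - (z : EuclideanSpace ℝ (Fin d))‖ ^ 2) = G δ x := by
  classical
  have hnorm : ∀ z : EuclideanSpace ℝ (Fin d), ‖x - z‖ ^ 2 = ∑ i, (x i - z i) ^ 2 := by
    intro z
    rw [EuclideanSpace.norm_eq, Real.sq_sqrt (by positivity)]
    refine Finset.sum_congr rfl fun i _ => ?_
    rw [Real.norm_eq_abs, sq_abs]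
    rfl
  have hne : Nonempty (design d δ) := by
    refine ⟨⟨WithLp.toLp 2 (fun i => δ * 1), ⟨fun _ => 1, fun i => Or.inl rfl, ?_, rfl⟩⟩⟩
    have : {i : Fin d | (1 : ℝ) = -1} = ∅ := by ext i; norm_num
    simp [this]
  have hbdd : BddBelow (Set.range fun z : design d δ => ‖x - (z : EuclideanSpace ℝ (Fin d))‖ ^ 2) :=
    ⟨0, by rintro _ ⟨z, rfl⟩; positivity⟩
  set N : Finset (Fin d) := Finset.univ.filter fun i => x i < 0 with hN
  have hncard : ∀ (ε : Fin d → ℝ), {i | ε i = -1}.ncard =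
      (Finset.univ.filter fun i => ε i = -1).card := by
    intro ε
    rw [← Set.ncard_coe_finset]
    congr 1
    ext i; simp
  rw [G_eq_if]
  apply le_antisymm
  · -- upper bound: exhibit a minimizer
    by_cases hodd : Odd N.card
    · -- odd case: flip the sign at an argmin coordinate
      obtain ⟨j, -, hj⟩ := Finset.exists_mem_eq_inf' (Finset.univ_nonempty (α := Fin d))
        fun i => |x i|
      set ε : Fin d → ℝ := fun i => if i = j then -sgn (x i) else sgn (x i) with hε
      have hmem : (WithLp.toLp 2 (fun i => δ * ε i) : EuclideanSpace ℝ (Fin d)) ∈ design d δ := by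
        refine ⟨ε, fun i => ?_, ?_, rfl⟩
        · by_cases h : i = j
          · rcases sgn_mem (x i) with h' | h'
            · right; rw [show ε i = -sgn (x i) from if_pos h, h']
            · left; rw [show ε i = -sgn (x i) from if_pos h, h']; norm_num
          · rw [show ε i = sgn (x i) from if_neg h]; exact sgn_mem (x i)
        · rw [hncard]
          by_cases hxj : x j < 0
          · have hj_mem : j ∈ N := by simp [hN, hxj]
            have hset : (Finset.univ.filter fun i => ε i = -1) = N.erase j := by
              ext i
              rw [Finset.mem_filter, Finset.mem_erase]
              by_cases h : i = j
              · subst h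
                rw [show ε i = -sgn (x i) from if_pos rfl, sgn_of_neg hxj]
                norm_num
              · rw [show ε i = sgn (x i) from if_neg h, sgn_eq_neg_one_iff]
                simp [h, hN]
            rw [hset, Finset.card_erase_of_mem hj_mem]
            obtain ⟨k, hk⟩ := hodd
            exact ⟨k, by omega⟩
          · have hj_mem : j ∉ N := by simp [hN, hxj]
            have hset : (Finset.univ.filter fun i => ε i = -1) = insert j N := by
              ext i
              rw [Finset.mem_filter, Finset.mem_insert]
              by_cases h : i = j
              · subst h
                rw [show ε i = -sgn (x i) from if_pos rfl, sgn_of_nonneg hxj]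
                simp
              · rw [show ε i = sgn (x i) from if_neg h, sgn_eq_neg_one_iff]
                simp [h, hN]
            rw [hset, Finset.card_insert_of_notMem hj_mem]
            obtain ⟨k, hk⟩ := hodd
            exact ⟨k + 1, by omega⟩
      refine le_trans (ciInf_le hbdd ⟨_, hmem⟩) ?_
      rw [hnorm]
      have hval : ∀ i, (x i - δ * ε i) ^ 2 =
          (|x i| - δ) ^ 2 + (if i = j then 4 * δ * |x j| else 0) := by
        intro i
        by_cases h : i = j
        · subst h
          rw [if_pos rfl]
          simp only [hε, if_pos rfl]
          linear_combination δ ^ 2 * sgn_sq (x i) - sq_abs (x i) + 2 * δ * mul_sgn (x i)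
        · rw [if_neg h]
          simp only [hε, if_neg h]
          linear_combination δ ^ 2 * sgn_sq (x i) - sq_abs (x i) - 2 * δ * mul_sgn (x i)
      calc ∑ i, (x i - δ * ε i) ^ 2
          = ∑ i, ((|x i| - δ) ^ 2 + (if i = j then 4 * δ * |x j| else 0)) :=
            Finset.sum_congr rfl fun i _ => hval i
        _ = (∑ i, (|x i| - δ) ^ 2) + 4 * δ * |x j| := by
            rw [Finset.sum_add_distrib, Finset.sum_ite_eq' Finset.univ j fun _ => 4 * δ * |x j|]
            simp
        _ ≤ _ := by rw [if_pos hodd, ← hj]; exact le_refl _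
    · -- even case: take the coordinatewise sign vector
      set ε : Fin d → ℝ := fun i => sgn (x i) with hε
      have hmem : (WithLp.toLp 2 (fun i => δ * ε i) : EuclideanSpace ℝ (Fin d)) ∈ design d δ := by
        refine ⟨ε, fun i => sgn_mem (x i), ?_, rfl⟩
        rw [hncard]
        have hset : (Finset.univ.filter fun i => ε i = -1) = N := by
          ext i
          simp only [Finset.mem_filter, Finset.mem_univ, true_and, hN, hε]
          rw [sgn_eq_neg_one_iff]
        rw [hset]
        exact Nat.not_odd_iff_even.mp hodd
      refine le_trans (ciInf_le hbdd ⟨_, hmem⟩) ?_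
      rw [hnorm, if_neg hodd, add_zero]
      refine le_of_eq (Finset.sum_congr rfl fun i _ => ?_)
      simp only [hε]
      linear_combination δ ^ 2 * sgn_sq (x i) - sq_abs (x i) - 2 * δ * mul_sgn (x i)
  · -- lower bound
    apply le_ciInf
    rintro ⟨z, ε, hε1, hε2, hz⟩
    rw [hnorm, hz]
    beta_reduce
    have hsq : ∀ i, (ε i) ^ 2 = 1 := by
      intro i; rcases hε1 i with h | h <;> rw [h] <;> norm_num
    have habs : ∀ i, x i * ε i ≤ |x i| := by
      intro i
      calc x i * ε i ≤ |x i * ε i| := le_abs_self _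
        _ = |x i| := by rw [abs_mul]; rcases hε1 i with h | h <;> rw [h] <;> simp
    have expand : ∑ i, (x i - δ * ε i) ^ 2 =
        (∑ i, (|x i| - δ) ^ 2) + 2 * δ * ∑ i, (|x i| - x i * ε i) := by
      rw [Finset.mul_sum, ← Finset.sum_add_distrib]
      refine Finset.sum_congr rfl fun i _ => ?_
      linear_combination δ ^ 2 * hsq i - sq_abs (x i)
    rw [expand]
    refine add_le_add_right ?_ _
    by_cases hodd : Odd N.card
    · rw [if_pos hodd]
      by_cases hzero : ∃ i, x i = 0
      · obtain ⟨i0, hi0⟩ := hzero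
        have h1 : mabs x = 0 := le_antisymm (by simpa [hi0] using mabs_le x i0) (mabs_nonneg x)
        rw [h1, mul_zero]
        refine mul_nonneg (by positivity) (Finset.sum_nonneg fun i _ => ?_)
        linarith [habs i]
      · push_neg at hzero
        set E : Finset (Fin d) := Finset.univ.filter fun i => ε i = -1 with hE
        have hEeven : Even E.card := by rwa [hncard ε] at hε2
        have hNE : N ≠ E := by
          intro h
          rw [h] at hodd
          exact (Nat.not_odd_iff_even.mpr hEeven) hodd
        have hk : ∃ k, x k * ε k = -|x k| := by
          by_contra hcon
          push_neg at hcon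
          apply hNE
          ext i
          simp only [hN, hE, Finset.mem_filter, Finset.mem_univ, true_and]
          rcases hε1 i with h | h
          · rw [h]
            constructor
            · intro hx
              exfalso
              apply hcon i
              rw [h, mul_one, abs_of_neg hx, neg_neg]
            · intro h1; norm_num at h1
          · rw [h]
            constructor
            · intro _; rfl
            · intro _
              rcases lt_trichotomy (x i) 0 with h1 | h1 | h1
              · exact h1
              · exact absurd h1 (hzero i)
              · exfalso
                apply hcon i
                rw [h, abs_of_pos h1]
                ring
        obtain ⟨k, hk⟩ := hk
        have hterm : 2 * |x k| ≤ ∑ i, (|x i| - x i * ε i) := by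
          have h1 : ∀ i ∈ Finset.univ, (0 : ℝ) ≤ |x i| - x i * ε i :=
            fun i _ => by linarith [habs i]
          have h2 : |x k| - x k * ε k = 2 * |x k| := by rw [hk]; ring
          calc (2 : ℝ) * |x k| = |x k| - x k * ε k := h2.symm
            _ ≤ ∑ i, (|x i| - x i * ε i) := Finset.single_le_sum h1 (Finset.mem_univ k)
        have hm : mabs x ≤ |x k| := mabs_le x k
        nlinarith [mabs_nonneg x]
    · rw [if_neg hodd]
      refine mul_nonneg (by positivity) (Finset.sum_nonneg fun i _ => ?_)
      linarith [habs i]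

/-- The box in the pi space. -/
def Box (d : ℕ) : Set (Fin d → ℝ) := Set.univ.pi fun _ => Set.Icc (-1 : ℝ) 1

lemma measurableSet_Box : MeasurableSet (Box d) :=
  MeasurableSet.univ_pi fun _ => measurableSet_Icc

lemma isCompact_Box : IsCompact (Box d) :=
  isCompact_univ_pi fun _ => isCompact_Icc

lemma cont_mabs [NeZero d] : Continuous (mabs (d := d)) := by
  apply Continuous.finset_inf'_apply
  intro i _
  exact continuous_abs.comp (continuous_apply i)

lemma cont_intOn {f : (Fin d → ℝ) → ℝ} (hf : Continuous f) : IntegrableOn f (Box d) :=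
  hf.continuousOn.integrableOn_compact isCompact_Box

/-- set integral over the box of a product of single-coordinate functions. -/
lemma setIntegral_box (f : Fin d → ℝ → ℝ) :
    ∫ y in Box d, ∏ i, f i (y i) = ∏ i, ∫ s in Set.Icc (-1 : ℝ) 1, f i s := by
  rw [← integral_indicator measurableSet_Box]
  have hpt : ∀ y : Fin d → ℝ, (Box d).indicator (fun y => ∏ i, f i (y i)) y
      = ∏ i, (Set.Icc (-1 : ℝ) 1).indicator (f i) (y i) := by
    intro y
    by_cases hy : y ∈ Box d
    · rw [Set.indicator_of_mem hy]
      exact Finset.prod_congr rfl fun i _ =>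
        (Set.indicator_of_mem (hy i (Set.mem_univ i)) _).symm
    · rw [Set.indicator_of_notMem hy]
      obtain ⟨k, hk⟩ : ∃ k, y k ∉ Set.Icc (-1 : ℝ) 1 := by
        by_contra hcon; push_neg at hcon; exact hy fun i _ => hcon i
      exact (Finset.prod_eq_zero (Finset.mem_univ k) (Set.indicator_of_notMem hk _)).symm
  simp_rw [hpt]
  rw [MeasureTheory.integral_fintype_prod_volume_eq_prod
    fun i => (Set.Icc (-1 : ℝ) 1).indicator (f i)]
  exact Finset.prod_congr rfl fun i _ => integral_indicator measurableSet_Icc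

lemma integral_sq_abs (δ : ℝ) :
    ∫ s in Set.Icc (-1 : ℝ) 1, (|s| - δ) ^ 2 = 2 * (δ ^ 2 - δ + 1 / 3) := by
  have hcont : Continuous fun s : ℝ => (|s| - δ) ^ 2 :=
    (continuous_abs.sub continuous_const).pow 2
  rw [MeasureTheory.integral_Icc_eq_integral_Ioc,
    ← intervalIntegral.integral_of_le (by norm_num : (-1 : ℝ) ≤ 1),
    ← intervalIntegral.integral_add_adjacent_intervals (a := -1) (b := 0) (c := 1)
      (hcont.intervalIntegrable _ _) (hcont.intervalIntegrable _ _)]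
  have h1 : ∫ s in (-1 : ℝ)..0, (|s| - δ) ^ 2 = ∫ s in (-1 : ℝ)..0, (s + δ) ^ 2 := by
    refine intervalIntegral.integral_congr fun s hs => ?_
    rw [Set.uIcc_of_le (by norm_num : (-1 : ℝ) ≤ 0)] at hs
    rw [abs_of_nonpos hs.2]
    ring
  have h2 : ∫ s in (0 : ℝ)..1, (|s| - δ) ^ 2 = ∫ s in (0 : ℝ)..1, (s - δ) ^ 2 := by
    refine intervalIntegral.integral_congr fun s hs => ?_
    rw [Set.uIcc_of_le (by norm_num : (0 : ℝ) ≤ 1)] at hs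
    rw [abs_of_nonneg hs.1]
  rw [h1, h2, intervalIntegral.integral_comp_add_right (fun u => u ^ 2) δ,
    intervalIntegral.integral_comp_sub_right (fun u => u ^ 2) δ, integral_pow, integral_pow]
  ring

lemma integral_box_single [NeZero d] (δ : ℝ) (i0 : Fin d) :
    ∫ y in Box d, (|y i0| - δ) ^ 2 = 2 * (δ ^ 2 - δ + 1 / 3) * 2 ^ (d - 1) := by
  have hpt : ∀ y : Fin d → ℝ, (|y i0| - δ) ^ 2
      = ∏ i, (fun i (s : ℝ) => if i = i0 then (|s| - δ) ^ 2 else 1) i (y i) := by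
    intro y
    rw [Finset.prod_ite_eq' Finset.univ i0 fun i => (|y i| - δ) ^ 2]
    simp
  rw [setIntegral_congr_fun measurableSet_Box fun y (_ : y ∈ Box d) => hpt y,
    setIntegral_box (fun i (s : ℝ) => if i = i0 then (|s| - δ) ^ 2 else 1)]
  have hfac : ∀ i : Fin d, (∫ s in Set.Icc (-1 : ℝ) 1,
      (fun i (s : ℝ) => if i = i0 then (|s| - δ) ^ 2 else 1) i s)
      = if i = i0 then 2 * (δ ^ 2 - δ + 1 / 3) else 2 := by
    intro i
    by_cases h : i = i0
    · simp only [h, if_true]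
      exact integral_sq_abs δ
    · simp only [h, if_false]
      rw [setIntegral_const, Real.volume_real_Icc]
      norm_num
  rw [Finset.prod_congr rfl fun i _ => hfac i,
    ← Finset.mul_prod_erase Finset.univ _ (Finset.mem_univ i0), if_pos rfl]
  have : ∏ i ∈ Finset.univ.erase i0, (if i = i0 then 2 * (δ ^ 2 - δ + 1 / 3) else (2 : ℝ))
      = 2 ^ (d - 1) := by
    rw [Finset.prod_congr rfl fun i hi => if_neg (Finset.mem_erase.mp hi).1,
      Finset.prod_const, Finset.card_erase_of_mem (Finset.mem_univ i0)]
    simp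
  rw [this]

lemma I1 [NeZero d] (δ : ℝ) :
    ∫ y in Box d, ∑ i, (|y i| - δ) ^ 2 = d * 2 ^ d * (δ ^ 2 - δ + 1 / 3) := by
  have hint : ∀ i : Fin d, IntegrableOn (fun y : Fin d → ℝ => (|y i| - δ) ^ 2) (Box d) :=
    fun i => cont_intOn (((continuous_abs.comp (continuous_apply i)).sub continuous_const).pow 2)
  rw [MeasureTheory.integral_finset_sum Finset.univ fun i _ => hint i]
  rw [Finset.sum_congr rfl fun i _ => integral_box_single δ i, Finset.sum_const]
  have hd : (2 : ℝ) ^ (d - 1) * 2 = 2 ^ d := by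
    have : d - 1 + 1 = d := Nat.succ_pred_eq_of_pos (Nat.pos_of_ne_zero (NeZero.ne d))
    rw [← pow_succ, this]
  simp only [Finset.card_univ, Fintype.card_fin, nsmul_eq_mul]
  rw [← hd]
  ring

lemma measurable_mabs [NeZero d] : Measurable (mabs (d := d)) := cont_mabs.measurable

lemma I2 [NeZero d] : ∫ y in Box d, mabs y = 2 ^ d / (d + 1) := by
  obtain ⟨i0⟩ := (inferInstance : Nonempty (Fin d))
  have hint : IntegrableOn (mabs (d := d)) (Box d) := cont_intOn cont_mabs
  have hnn : 0 ≤ᵐ[volume.restrict (Box d)] mabs (d := d) :=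
    Eventually.of_forall fun y => mabs_nonneg y
  have hbd : mabs (d := d) ≤ᵐ[volume.restrict (Box d)] fun _ => (1 : ℝ) := by
    refine (ae_restrict_iff' measurableSet_Box).mpr (Eventually.of_forall fun y hy => ?_)
    have h := hy i0 (Set.mem_univ i0)
    calc mabs y ≤ |y i0| := mabs_le y i0
      _ ≤ 1 := abs_le.mpr ⟨h.1, h.2⟩
  rw [hint.integral_eq_integral_Ioc_meas_le hnn hbd]
  have hmeas : ∀ t ∈ Set.Ioc (0 : ℝ) 1,
      ((volume.restrict (Box d)) {a | t ≤ mabs a}).toReal = (2 * (1 - t)) ^ d := by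
    intro t ht
    rw [Measure.restrict_apply (measurableSet_le measurable_const measurable_mabs)]
    have hset : {a : Fin d → ℝ | t ≤ mabs a} ∩ Box d
        = Set.univ.pi fun _ => Set.Icc (-1 : ℝ) (-t) ∪ Set.Icc t 1 := by
      ext y
      simp only [Set.mem_inter_iff, Set.mem_setOf_eq, Box, Set.mem_pi, Set.mem_univ,
        forall_true_left, Set.mem_union, Set.mem_Icc]
      rw [le_mabs]
      constructor
      · rintro ⟨h1, h2⟩ i
        have h1i := h1 i
        have h2i := h2 i
        rcases lt_or_ge (y i) 0 with h | h
        · left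
          rw [abs_of_neg h] at h1i
          exact ⟨h2i.1, by linarith⟩
        · right
          rw [abs_of_nonneg h] at h1i
          exact ⟨h1i, h2i.2⟩
      · intro h
        constructor
        · intro i
          rcases h i with h' | h'
          · rw [abs_of_neg (by linarith [ht.1] : y i < 0)]
            linarith
          · rw [abs_of_nonneg (by linarith [ht.1] : 0 ≤ y i)]
            exact h'.1
        · intro i
          rcases h i with h' | h' <;> constructor <;> linarith [ht.1, ht.2, h'.1, h'.2]
    rw [hset, volume_pi_pi]
    have hvol : volume (Set.Icc (-1 : ℝ) (-t) ∪ Set.Icc t 1) = ENNReal.ofReal (2 * (1 - t)) := by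
      have hdisj : Disjoint (Set.Icc (-1 : ℝ) (-t)) (Set.Icc t 1) :=
        Set.disjoint_left.mpr fun s hs1 hs2 => by
          simp only [Set.mem_Icc] at hs1 hs2
          linarith [ht.1]
      rw [measure_union hdisj measurableSet_Icc, Real.volume_Icc, Real.volume_Icc,
        ← ENNReal.ofReal_add (by linarith [ht.2]) (by linarith [ht.2])]
      congr 1
      ring
    rw [Finset.prod_congr rfl fun (_ : Fin d) _ => hvol, Finset.prod_const, Finset.card_univ,
      Fintype.card_fin, ← ENNReal.ofReal_pow (by linarith [ht.2] : (0:ℝ) ≤ 2 * (1 - t)),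
      ENNReal.toReal_ofReal (pow_nonneg (by linarith [ht.2] : (0:ℝ) ≤ 2 * (1 - t)) d)]
  simp only [measureReal_def]
  rw [setIntegral_congr_fun measurableSet_Ioc hmeas,
    ← intervalIntegral.integral_of_le (by norm_num : (0 : ℝ) ≤ 1),
    intervalIntegral.integral_comp_sub_left (fun u => (2 * u) ^ d) 1]
  simp_rw [mul_pow]
  rw [intervalIntegral.integral_const_mul, integral_pow]
  push_cast
  norm_num
  ring

lemma measurable_sgn : Measurable sgn := by
  unfold sgn
  exact Measurable.ite (measurableSet_lt measurable_id measurable_const)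
    measurable_const measurable_const

lemma measurable_psign [NeZero d] : Measurable (psign (d := d)) := by
  unfold psign
  exact Finset.measurable_prod _ fun i _ => measurable_sgn.comp (measurable_pi_apply i)

lemma abs_psign [NeZero d] (y : Fin d → ℝ) : |psign y| = 1 := by
  rw [psign_eq, abs_pow, abs_neg, abs_one, one_pow]

lemma I3 [NeZero d] : ∫ y in Box d, mabs y * psign y = 0 := by
  obtain ⟨i0⟩ := (inferInstance : Nonempty (Fin d))
  set f : Fin d → ℝ → ℝ := fun i => if i = i0 then (fun s => -s) else id with hf
  set T : (Fin d → ℝ) → (Fin d → ℝ) := fun a i => f i (a i) with hT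
  have hTapp : ∀ (y : Fin d → ℝ) i, T y i = if i = i0 then -(y i) else y i := by
    intro y i
    simp only [hT, hf, apply_ite (fun g : ℝ → ℝ => g (y i)), id_eq]
  have hfp : ∀ i, MeasurePreserving (f i) volume volume := by
    intro i
    by_cases h : i = i0
    · simp only [hf, h, if_true]
      exact Measure.measurePreserving_neg volume
    · simp only [hf, h, if_false]
      exact MeasurePreserving.id volume
  have hTvol : MeasurePreserving T volume volume := by
    have := measurePreserving_pi (fun _ : Fin d => (volume : Measure ℝ))
      (fun _ => (volume : Measure ℝ)) hfp
    rwa [← volume_pi] at this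
  have hinv : Function.Involutive T := by
    intro y
    funext i
    rw [hTapp, hTapp]
    by_cases h : i = i0 <;> simp [h]
  have hemb : MeasurableEmbedding T :=
    MeasurableEquiv.measurableEmbedding
      { toEquiv := hinv.toPerm T
        measurable_toFun := hTvol.measurable
        measurable_invFun := hTvol.measurable }
  have hTBox : T ⁻¹' Box d = Box d := by
    ext y
    simp only [Set.mem_preimage, Box, Set.mem_pi, Set.mem_univ, forall_true_left, Set.mem_Icc]
    constructor
    · intro h i
      have hi := h i
      rw [hTapp] at hi
      by_cases hii : i = i0
      · rw [if_pos hii] at hi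
        exact ⟨by linarith [hi.2], by linarith [hi.1]⟩
      · rwa [if_neg hii] at hi
    · intro h i
      rw [hTapp]
      have hi := h i
      by_cases hii : i = i0
      · rw [if_pos hii]
        exact ⟨by linarith [hi.2], by linarith [hi.1]⟩
      · rwa [if_neg hii]
  have h1 : ∫ y in Box d, mabs y * psign y = ∫ y in Box d, mabs (T y) * psign (T y) := by
    have := hTvol.setIntegral_preimage_emb hemb (fun y => mabs y * psign y) (Box d)
    rw [← this, hTBox]
  have hnull : (volume : Measure (Fin d → ℝ)) {y | y i0 = 0} = 0 := by
    have hset : {y : Fin d → ℝ | y i0 = 0}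
        = Set.univ.pi fun i => if i = i0 then ({0} : Set ℝ) else Set.univ := by
      ext y
      simp only [Set.mem_setOf_eq, Set.mem_pi, Set.mem_univ, forall_true_left]
      constructor
      · intro h i
        by_cases hii : i = i0
        · subst hii; simp [h]
        · simp [hii]
      · intro h
        have := h i0
        simpa using this
    rw [hset, volume_pi_pi]
    exact Finset.prod_eq_zero (Finset.mem_univ i0) (by simp)
  have hae : ∀ᵐ y ∂(volume.restrict (Box d)), y i0 ≠ 0 := by
    refine ae_restrict_of_ae ?_
    rw [ae_iff]
    convert hnull using 2
    ext y
    simp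
  have h2 : ∀ᵐ y ∂(volume.restrict (Box d)),
      mabs (T y) * psign (T y) = -(mabs y * psign y) := by
    filter_upwards [hae] with y hy
    have hmabs : mabs (T y) = mabs y := by
      unfold mabs
      refine Finset.inf'_congr Finset.univ_nonempty rfl fun i _ => ?_
      rw [hTapp]
      by_cases h : i = i0 <;> simp [h, abs_neg]
    have hpsign : psign (T y) = -psign y := by
      unfold psign
      rw [← Finset.mul_prod_erase Finset.univ (fun i => sgn (T y i)) (Finset.mem_univ i0),
        ← Finset.mul_prod_erase Finset.univ (fun i => sgn (y i)) (Finset.mem_univ i0)]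
      have hrest : ∏ i ∈ Finset.univ.erase i0, sgn (T y i)
          = ∏ i ∈ Finset.univ.erase i0, sgn (y i) := by
        refine Finset.prod_congr rfl fun i hi => ?_
        rw [hTapp, if_neg (Finset.mem_erase.mp hi).1]
      rw [hrest, hTapp, if_pos rfl, sgn_neg (y i0) hy]
      ring
    rw [hmabs, hpsign]
    ring
  have h3 : ∫ y in Box d, mabs (T y) * psign (T y) = -∫ y in Box d, mabs y * psign y := by
    rw [integral_congr_ae h2]
    exact integral_neg _
  have := h1.trans h3
  linarith

lemma integral_G [NeZero d] (δ : ℝ) (hδ0 : 0 < δ) (hδ1 : δ ≤ 1) :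
    ∫ y in Box d, G δ y = d * 2 ^ d * (δ ^ 2 - δ + 1 / 3) + 2 * δ * (2 ^ d / (d + 1)) := by
  obtain ⟨i0⟩ := (inferInstance : Nonempty (Fin d))
  have hi1 : IntegrableOn (fun y : Fin d → ℝ => ∑ i, (|y i| - δ) ^ 2) (Box d) := by
    refine cont_intOn (continuous_finset_sum _ fun i _ => ?_)
    exact ((continuous_abs.comp (continuous_apply i)).sub continuous_const).pow 2
  have hi2 : IntegrableOn (mabs (d := d)) (Box d) := cont_intOn cont_mabs
  have hi3 : IntegrableOn (fun y : Fin d → ℝ => mabs y * psign y) (Box d) := by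
    have hmeas : AEStronglyMeasurable (fun y : Fin d → ℝ => mabs y * psign y)
        (volume.restrict (Box d)) :=
      (measurable_mabs.mul measurable_psign).aestronglyMeasurable
    refine ⟨hmeas, ?_⟩
    have hfin : volume (Box d) < ⊤ := isCompact_Box.measure_lt_top
    refine (HasFiniteIntegral.restrict_of_bounded (C := 1) hfin ?_)
    rw [ae_restrict_iff' measurableSet_Box]
    refine Eventually.of_forall fun y hy => ?_
    have h := hy i0 (Set.mem_univ i0)
    rw [Real.norm_eq_abs, abs_mul, abs_psign, mul_one]
    calc |mabs y| = mabs y := abs_of_nonneg (mabs_nonneg y)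
      _ ≤ |y i0| := mabs_le y i0
      _ ≤ 1 := abs_le.mpr ⟨h.1, h.2⟩
  have hG : (fun y : Fin d → ℝ => G δ y) = fun y =>
      (∑ i, (|y i| - δ) ^ 2) + ((2 * δ) * mabs y - (2 * δ) * (mabs y * psign y)) :=
    funext fun y => by rw [G]; ring
  have hi2' : IntegrableOn (fun y : Fin d → ℝ => (2 * δ) * mabs y) (Box d) :=
    hi2.const_mul (2 * δ)
  have hi3' : IntegrableOn (fun y : Fin d → ℝ => (2 * δ) * (mabs y * psign y)) (Box d) :=
    hi3.const_mul (2 * δ)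
  have hi23 : IntegrableOn (fun y : Fin d → ℝ =>
      (2 * δ) * mabs y - (2 * δ) * (mabs y * psign y)) (Box d) := hi2'.sub hi3'
  rw [hG, integral_add hi1 hi23, integral_sub hi2' hi3',
    integral_const_mul, integral_const_mul, I1, I2, I3]
  ring

end QEAux

open QEAux

theorem stmt3 (d : ℕ) (hd : 2 ≤ d) (δ : ℝ) (hδ0 : 0 < δ) (hδ1 : δ ≤ 1) :
    quantErr d (design d δ) = d * (δ ^ 2 - δ + 1 / 3) + 2 * δ / (d + 1) := by
  haveI : NeZero d := ⟨by omega⟩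
  have key : ∫ x in cube d, (⨅ z : design d δ, ‖x - (z : EuclideanSpace ℝ (Fin d))‖ ^ 2)
      = d * 2 ^ d * (δ ^ 2 - δ + 1 / 3) + 2 * δ * (2 ^ d / (d + 1)) := by
    have hcong : ∀ x ∈ cube d,
        (⨅ z : design d δ, ‖x - (z : EuclideanSpace ℝ (Fin d))‖ ^ 2) = G δ x :=
      fun x _ => iInf_design δ hδ0 x
    have hcube : MeasurableSet (cube d) := by
      have : cube d = ⋂ i, (fun x : EuclideanSpace ℝ (Fin d) => x i) ⁻¹' Set.Icc (-1 : ℝ) 1 := by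
        ext x; simp [cube, Set.mem_iInter]
      rw [this]
      exact MeasurableSet.iInter fun i => ((measurable_pi_apply i).comp (WithLp.measurable_ofLp 2 (Fin d → ℝ))) measurableSet_Icc
    rw [setIntegral_congr_fun hcube hcong]
    -- transfer to the pi space
    have hvol := (EuclideanSpace.volume_preserving_symm_measurableEquiv_toLp (Fin d)).symm
    have hemb : MeasurableEmbedding (MeasurableEquiv.toLp 2 (Fin d → ℝ)) :=
      (MeasurableEquiv.toLp 2 (Fin d → ℝ)).measurableEmbedding
    have htrans := hvol.setIntegral_preimage_emb hemb
      (fun x : EuclideanSpace ℝ (Fin d) => G δ x) (cube d)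
    have hpre : (MeasurableEquiv.toLp 2 (Fin d → ℝ)).symm.symm ⁻¹' (cube d) = Box d := by
      ext y
      simp only [Set.mem_preimage, cube, Set.mem_setOf_eq, Box, Set.mem_pi, Set.mem_univ,
        forall_true_left]
      rfl
    rw [← htrans, hpre]
    exact integral_G δ hδ0 hδ1
  rw [quantErr, key]
  have h2 : (2 : ℝ) ^ d ≠ 0 := by positivity
  have hd1 : (d : ℝ) + 1 ≠ 0 := by positivity
  field_simp

end
end

section
/- Let d ≥ 2, 0 < δ ≤ 1 and n = 2^{d−1}. Then the normalised quantization error of the design D(d,δ) satisfies n^{2/d}·θ(D(d,δ))/(4d) = 2^{−2/d}·(δ² − δ + 1/3 + 2δ/(d(d+1))). -/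
open MeasureTheory Filter

noncomputable section

open Finset

variable {d : ℕ}

lemma prod_pm (p : Fin d → Prop) [DecidablePred p] :
    ∏ i, (if p i then (-1:ℝ) else 1) = (-1) ^ (univ.filter p).card := by
  rw [Finset.prod_ite]; simp

lemma even_iff_prod (ε : Fin d → ℝ) :
    Even {i | ε i = -1}.ncard ↔ ∏ i, (if ε i = -1 then (-1:ℝ) else 1) = 1 := by
  classical
  have h1 : {i | ε i = -1} = ↑(univ.filter fun i => ε i = -1) := by
    ext i; simp
  rw [h1, Set.ncard_coe_finset, prod_pm, neg_one_pow_eq_one_iff_even (by norm_num : (-1:ℝ) ≠ 1)]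

lemma prodB (x ε : Fin d → ℝ) (hε : ∀ i, ε i = 1 ∨ ε i = -1) (hx : ∀ i, x i ≠ 0) :
    ∏ i, (if ε i * x i < 0 then (-1:ℝ) else 1) =
      (∏ i, if ε i = -1 then (-1:ℝ) else 1) * ∏ i, (if x i < 0 then (-1:ℝ) else 1) := by
  rw [← Finset.prod_mul_distrib]
  refine Finset.prod_congr rfl fun i _ => ?_
  rcases hε i with h | h <;> rcases (hx i).lt_or_gt with h' | h' <;>
    simp [h, h', not_lt.2 h'.le, mul_pos_iff, mul_neg_iff, h'.not_gt, le_of_lt] <;>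
    norm_num [h'.not_gt, h', h'.le, not_lt.2 h'.le]

lemma sum_sign_eq (x ε : Fin d → ℝ) (hε : ∀ i, ε i = 1 ∨ ε i = -1) :
    ∑ i, ε i * x i =
      ∑ i, |x i| - 2 * ∑ i ∈ univ.filter (fun i => ε i * x i < 0), |x i| := by
  have : ∀ i, ε i * x i = |x i| - 2 * (if ε i * x i < 0 then |x i| else 0) := by
    intro i
    rcases hε i with h | h <;> rw [h] <;> rcases le_or_gt 0 (x i) with h' | h' <;>
      split_ifs with hc <;>
      [skip; skip; skip; skip; skip; skip; skip; skip] <;>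
      rcases le_or_gt 0 (x i) with h'' | h'' <;>
      simp_all [abs_of_nonneg, abs_of_neg] <;> linarith
  rw [Finset.sum_congr rfl fun i _ => this i, Finset.sum_sub_distrib, ← Finset.mul_sum,
    Finset.sum_ite, Finset.sum_const, smul_zero, add_zero]

lemma norm_sq_eq (δ : ℝ) (x z : EuclideanSpace ℝ (Fin d)) (ε : Fin d → ℝ)
    (hz : ∀ i, z i = δ * ε i)
    (hε : ∀ i, ε i = 1 ∨ ε i = -1) :
    ‖x - z‖ ^ 2 = ∑ i, x i ^ 2 + d * δ ^ 2 - 2 * δ * ∑ i, ε i * x i := by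
  have h1 : ‖x - z‖ ^ 2 = ∑ i, (x i - δ * ε i) ^ 2 := by
    rw [EuclideanSpace.norm_eq, Real.sq_sqrt (by positivity)]
    refine Finset.sum_congr rfl fun i _ => ?_
    have : (x - z) i = x i - z i := rfl
    rw [this, hz i, Real.norm_eq_abs, sq_abs]
  rw [h1]
  have h2 : ∀ i, (x i - δ * ε i) ^ 2 = x i ^ 2 + δ ^ 2 - 2 * δ * (ε i * x i) := by
    intro i; rcases hε i with h | h <;> rw [h] <;> ring
  rw [Finset.sum_congr rfl fun i _ => h2 i]
  rw [Finset.sum_sub_distrib, Finset.sum_add_distrib, Finset.sum_const, ← Finset.mul_sum]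
  simp [nsmul_eq_mul]

lemma key_pos : ∀ y : ℝ, y ≠ 0 → (if y < 0 then (-1:ℝ) else 1) * y = |y| := by
  intro y hy
  rcases hy.lt_or_gt with h | h
  · simp [h, abs_of_neg h]
  · simp [h.not_gt, abs_of_pos h]

lemma key_neg : ∀ y : ℝ, y ≠ 0 → (if y < 0 then (1:ℝ) else -1) * y = -|y| := by
  intro y hy
  rcases hy.lt_or_gt with h | h
  · simp [h, abs_of_neg h]
  · simp [h.not_gt, abs_of_pos h]



lemma iInf_design {d : ℕ} (hd : 0 < d) (δ : ℝ) (hδ0 : 0 < δ) (x : EuclideanSpace ℝ (Fin d))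
    (hx : ∀ i, x i ≠ 0) (hne : (univ : Finset (Fin d)).Nonempty) :
    ⨅ z : design d δ, ‖x - (z : EuclideanSpace ℝ (Fin d))‖ ^ 2 =
      ∑ i, x i ^ 2 + d * δ ^ 2 - 2 * δ * ∑ i, |x i|
        + 2 * δ * (1 - ∏ i, (if x i < 0 then (-1:ℝ) else 1))
          * (univ.inf' hne fun i => |x i|) := by
  classical
  set m := univ.inf' hne fun i => |x i| with hm
  set P := ∏ i, (if x i < 0 then (-1:ℝ) else 1) with hPdef
  set A := ∑ i, |x i| with hA
  have hm0 : 0 ≤ m := Finset.le_inf' hne _ fun i _ => abs_nonneg _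
  have hPcases : P = 1 ∨ P = -1 := by
    rw [hPdef, prod_pm]
    rcases Nat.even_or_odd ((univ.filter fun i => x i < 0).card) with h | h
    · exact Or.inl h.neg_one_pow
    · exact Or.inr h.neg_one_pow
  have claim1 : ∀ ε : Fin d → ℝ, (∀ i, ε i = 1 ∨ ε i = -1) →
      Even {i | ε i = -1}.ncard → ∑ i, ε i * x i ≤ A - (1 - P) * m := by
    intro ε hε heven
    have hQ : ∏ i, (if ε i = -1 then (-1:ℝ) else 1) = 1 := (even_iff_prod ε).mp heven
    have hB := prodB x ε hε hx
    rw [hQ, one_mul, ← hPdef] at hB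
    rw [sum_sign_eq x ε hε]
    rcases hPcases with hP | hP
    · have h0 : 0 ≤ ∑ i ∈ univ.filter (fun i => ε i * x i < 0), |x i| :=
        Finset.sum_nonneg fun i _ => abs_nonneg _
      rw [hP]
      linarith
    · have hBne : ∃ i, ε i * x i < 0 := by
        by_contra hc
        push_neg at hc
        have h1 : ∏ i, (if ε i * x i < 0 then (-1:ℝ) else 1) = 1 :=
          Finset.prod_eq_one fun i _ => if_neg (not_lt.mpr (hc i))
        rw [h1, hP] at hB; norm_num at hB
      obtain ⟨i', hi'⟩ := hBne
      have h1 : m ≤ |x i'| := Finset.inf'_le _ (mem_univ _)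
      have h2 : |x i'| ≤ ∑ i ∈ univ.filter (fun i => ε i * x i < 0), |x i| :=
        Finset.single_le_sum (f := fun i => |x i|) (fun i _ => abs_nonneg _) (Finset.mem_filter.mpr ⟨mem_univ i', hi'⟩)
      rw [hP]
      linarith
  have claim2 : ∃ ε : Fin d → ℝ, (∀ i, ε i = 1 ∨ ε i = -1) ∧
      Even {i | ε i = -1}.ncard ∧ ∑ i, ε i * x i = A - (1 - P) * m := by
    rcases hPcases with hP | hP
    · refine ⟨fun i => if x i < 0 then -1 else 1, fun i => by by_cases h : x i < 0 <;> simp [h], ?_, ?_⟩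
      · rw [even_iff_prod]
        have h1 : ∀ i, (if (if x i < 0 then (-1:ℝ) else 1) = -1 then (-1:ℝ) else 1)
            = (if x i < 0 then (-1:ℝ) else 1) := fun i => by
          split_ifs with h1 h2 <;> norm_num at *
        rw [Finset.prod_congr rfl fun i _ => h1 i, ← hPdef, hP]
      · rw [sum_sign_eq x _ (fun i => by by_cases h : x i < 0 <;> simp [h])]
        have hEmpty : (univ.filter fun i => (if x i < 0 then (-1:ℝ) else 1) * x i < 0) = ∅ := by
          refine Finset.filter_false_of_mem fun i _ => ?_
          rw [key_pos (x i) (hx i)]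
          exact not_lt.mpr (abs_nonneg _)
        rw [hEmpty, Finset.sum_empty, hP]
        ring
    · obtain ⟨i₀, -, hmin⟩ := Finset.exists_mem_eq_inf' hne fun i => |x i|
      set ε : Fin d → ℝ :=
        fun i => if i = i₀ then (if x i < 0 then 1 else -1) else (if x i < 0 then -1 else 1)
        with hεdef
      have hεpm : ∀ i, ε i = 1 ∨ ε i = -1 := fun i => by
        rw [hεdef]; dsimp only; split_ifs <;> simp
      have hεx : ∀ i, ε i * x i = if i = i₀ then -|x i| else |x i| := by
        intro i
        rw [hεdef]; dsimp only
        by_cases h : i = i₀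
        · rw [if_pos h, if_pos h, key_neg (x i) (hx i)]
        · rw [if_neg h, if_neg h, key_pos (x i) (hx i)]
      have hBsingle : (univ.filter fun i => ε i * x i < 0) = {i₀} := by
        ext i
        simp only [mem_filter, mem_univ, true_and, Finset.mem_singleton, hεx i]
        constructor
        · intro h
          by_contra hc
          rw [if_neg hc] at h
          exact (not_lt.mpr (abs_nonneg _)) h
        · intro h
          rw [if_pos h, neg_lt_zero]
          exact abs_pos.mpr (hx i)
      have hprodB : ∏ i, (if ε i * x i < 0 then (-1:ℝ) else 1) = -1 := by
        rw [prod_pm, hBsingle, Finset.card_singleton, pow_one]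
      have hQ : ∏ i, (if ε i = -1 then (-1:ℝ) else 1) = 1 := by
        have := prodB x ε hεpm hx
        rw [hprodB, ← hPdef, hP] at this
        linarith
      refine ⟨ε, hεpm, (even_iff_prod ε).mpr hQ, ?_⟩
      rw [sum_sign_eq x ε hεpm, hBsingle, Finset.sum_singleton, hP, ← hmin, ← hm]
      ring
  have hbdd : BddBelow (Set.range fun z : design d δ => ‖x - (z : EuclideanSpace ℝ (Fin d))‖ ^ 2) :=
    ⟨0, by rintro t ⟨z, rfl⟩; positivity⟩
  obtain ⟨ε, h1, h2, h3⟩ := claim2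
  have hzmem : WithLp.toLp 2 (fun i => δ * ε i) ∈ design d δ := ⟨ε, h1, h2, rfl⟩
  haveI : Nonempty (design d δ) := ⟨⟨_, hzmem⟩⟩
  apply le_antisymm
  · calc ⨅ z : design d δ, ‖x - (z : EuclideanSpace ℝ (Fin d))‖ ^ 2
        ≤ ‖x - (⟨WithLp.toLp 2 (fun i => δ * ε i), hzmem⟩ : design d δ)‖ ^ 2 := ciInf_le hbdd _
      _ = ∑ i, x i ^ 2 + d * δ ^ 2 - 2 * δ * ∑ i, ε i * x i :=
          norm_sq_eq δ x _ ε (fun i => rfl) h1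
      _ = _ := by rw [h3]; ring
  · refine le_ciInf fun z => ?_
    obtain ⟨ε', h1', h2', h3'⟩ := z.2
    rw [norm_sq_eq δ x z ε' (fun i => congrFun h3' i) h1']
    have hc := claim1 ε' h1' h2'
    nlinarith [mul_le_mul_of_nonneg_left hc hδ0.le]


abbrev κ : Measure ℝ := volume.restrict (Set.Icc (-1:ℝ) 1)

instance : IsFiniteMeasure κ :=
  ⟨by rw [Measure.restrict_apply_univ]; exact measure_Icc_lt_top⟩

lemma kappa_univ : κ Set.univ = 2 := by
  rw [Measure.restrict_apply_univ, Real.volume_Icc]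
  norm_num

variable {d : ℕ}

abbrev ν (d : ℕ) : Measure (Fin d → ℝ) := Measure.pi fun _ => κ

lemma R1 : (volume : Measure (Fin d → ℝ)).restrict (Set.pi Set.univ fun _ => Set.Icc (-1:ℝ) 1)
    = ν d := by
  refine (Measure.pi_eq fun t ht => ?_).symm
  rw [Measure.restrict_apply (MeasurableSet.univ_pi ht), ← Set.pi_inter_distrib, volume_pi_pi]
  exact Finset.prod_congr rfl fun i _ => (Measure.restrict_apply (ht i)).symm

lemma R2 (i : Fin d) :
    Measure.map (fun x : Fin d → ℝ => x i) (ν d) = ((2:ENNReal) ^ (d-1)) • κ := by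
  refine Measure.ext fun t ht => ?_
  rw [Measure.map_apply (measurable_pi_apply i) ht, Measure.smul_apply, smul_eq_mul]
  have hpre : (fun x : Fin d → ℝ => x i) ⁻¹' t
      = Set.pi Set.univ (Function.update (fun _ => Set.univ) i t) := by
    rw [← Set.eval_preimage]
  rw [hpre, Measure.pi_pi]
  have : ∀ j, κ (Function.update (fun _ => Set.univ) i t j)
      = Function.update (fun _ => κ Set.univ) i (κ t) j := by
    intro j
    by_cases h : j = i
    · subst h; simp
    · simp [Function.update_of_ne h]
  rw [Finset.prod_congr rfl fun j _ => this j, Finset.prod_update_of_mem (mem_univ i),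
    Finset.prod_const, kappa_univ]
  have hcard : (univ \ {i} : Finset (Fin d)).card = d - 1 := by
    rw [Finset.sdiff_singleton_eq_erase, Finset.card_erase_of_mem (mem_univ i),
      Finset.card_univ, Fintype.card_fin]
  rw [hcard, mul_comm]

lemma integrable_eval (i : Fin d) (g : ℝ → ℝ) (hg : Measurable g) (hgi : Integrable g κ) :
    Integrable (fun x : Fin d → ℝ => g (x i)) (ν d) := by
  have h := hgi.smul_measure (c := (2:ENNReal)^(d-1)) (by simp)
  rw [← R2 i] at h
  exact (integrable_map_measure hg.aestronglyMeasurable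
    (measurable_pi_apply i).aemeasurable).mp h

lemma integral_eval (i : Fin d) (g : ℝ → ℝ) (hg : Measurable g) :
    ∫ x, g (x i) ∂(ν d) = (2:ℝ) ^ (d-1) * ∫ y, g y ∂κ := by
  rw [← integral_map (measurable_pi_apply i).aemeasurable hg.aestronglyMeasurable, R2 i,
    integral_smul_measure]
  simp [ENNReal.toReal_pow]

lemma int_sq : ∫ y, y ^ 2 ∂κ = 2/3 := by
  have : ∫ y, y ^ 2 ∂κ = ∫ y in Set.Icc (-1:ℝ) 1, y ^ 2 := rfl
  rw [this, MeasureTheory.integral_Icc_eq_integral_Ioc,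
    ← intervalIntegral.integral_of_le (by norm_num : (-1:ℝ) ≤ 1), integral_pow]
  try norm_num

lemma int_abs : ∫ y, |y| ∂κ = 1 := by
  have h0 : ∫ y, |y| ∂κ = ∫ y in (-1:ℝ)..1, |y| := by
    rw [intervalIntegral.integral_of_le (by norm_num : (-1:ℝ) ≤ 1),
      ← MeasureTheory.integral_Icc_eq_integral_Ioc]
    try rfl
  rw [h0, ← intervalIntegral.integral_add_adjacent_intervals
    (b := (0:ℝ)) (by apply Continuous.intervalIntegrable; continuity)
    (by apply Continuous.intervalIntegrable; continuity)]
  have h1 : ∫ y in (-1:ℝ)..0, |y| = ∫ y in (-1:ℝ)..0, -y := by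
    refine intervalIntegral.integral_congr fun y hy => ?_
    rw [Set.uIcc_of_le (by norm_num : (-1:ℝ) ≤ 0)] at hy
    exact abs_of_nonpos hy.2
  have h2 : ∫ y in (0:ℝ)..1, |y| = ∫ y in (0:ℝ)..1, y := by
    refine intervalIntegral.integral_congr fun y hy => ?_
    rw [Set.uIcc_of_le (by norm_num : (0:ℝ) ≤ 1)] at hy
    exact abs_of_nonneg hy.1
  rw [h1, h2, intervalIntegral.integral_neg, integral_id, integral_id]
  norm_num

lemma measurable_finset_inf' {ι : Type*} (s : Finset ι) (hs : s.Nonempty)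
    (g : ι → (Fin d → ℝ) → ℝ) (hg : ∀ i, Measurable (g i)) :
    Measurable fun x => s.inf' hs fun i => g i x := by
  induction' hs using Finset.Nonempty.cons_induction with i i s hi hs ih
  · have : (fun x => ({i} : Finset ι).inf' (Finset.singleton_nonempty i) fun j => g j x)
        = fun x => g i x := funext fun x => Finset.inf'_singleton ..
    rw [this]; exact hg i
  · simp_rw [Finset.inf'_cons hs]; exact (hg i).inf ih

lemma kappa_Icc : κ (Set.Icc (-1:ℝ) 1) = 2 := by
  rw [Measure.restrict_apply measurableSet_Icc, Set.inter_self, Real.volume_Icc,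
    show (1:ℝ) - -1 = 2 by norm_num]
  exact ENNReal.ofReal_ofNat 2

lemma nu_S : ν d (Set.pi Set.univ fun _ : Fin d => Set.Icc (-1:ℝ) 1) = 2 ^ d := by
  rw [Measure.pi_pi, Finset.prod_congr rfl fun i _ => kappa_Icc, Finset.prod_const,
    Finset.card_univ, Fintype.card_fin]

lemma nu_univ : ν d Set.univ = 2 ^ d := by
  rw [Measure.pi_univ, Finset.prod_congr rfl fun i _ => kappa_univ, Finset.prod_const,
    Finset.card_univ, Fintype.card_fin]

lemma ae_mem_S : ∀ᵐ x ∂(ν d), x ∈ Set.pi Set.univ fun _ : Fin d => Set.Icc (-1:ℝ) 1 := by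
  have hc : ν d (Set.pi Set.univ fun _ : Fin d => Set.Icc (-1:ℝ) 1)ᶜ = 0 := by
    rw [measure_compl (MeasurableSet.univ_pi fun _ => measurableSet_Icc)
      (by rw [nu_S]; exact ENNReal.pow_ne_top (by norm_num)), nu_S, nu_univ, tsub_self]
  exact ae_iff.mpr hc

lemma measurable_mm (hne : (univ : Finset (Fin d)).Nonempty) :
    Measurable fun x : Fin d → ℝ => univ.inf' hne fun i => |x i| :=
  measurable_finset_inf' univ hne _ fun i => (measurable_pi_apply i).abs

lemma integrable_mm (hne : (univ : Finset (Fin d)).Nonempty) :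
    Integrable (fun x : Fin d → ℝ => univ.inf' hne fun i => |x i|) (ν d) := by
  refine Integrable.mono' (integrable_const 1) (measurable_mm hne).aestronglyMeasurable ?_
  filter_upwards [ae_mem_S] with x hx
  obtain ⟨i, -⟩ := id hne
  have h1 : (univ.inf' hne fun i => |x i|) ≤ |x i| := Finset.inf'_le _ (mem_univ i)
  have h2 : |x i| ≤ 1 := abs_le.mpr ⟨(hx i trivial).1, (hx i trivial).2⟩
  have h3 : 0 ≤ univ.inf' hne fun i => |x i| :=
    Finset.le_inf' hne _ fun j _ => abs_nonneg _
  rw [Real.norm_eq_abs, abs_of_nonneg h3]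
  linarith

lemma int_min (hd : 0 < d) (hne : (univ : Finset (Fin d)).Nonempty) :
    ∫ x, (univ.inf' hne fun i => |x i|) ∂(ν d) = 2 ^ d / (d + 1) := by
  rw [Integrable.integral_eq_integral_meas_lt (integrable_mm hne)
    (ae_of_all _ fun x => Finset.le_inf' hne _ fun j _ => abs_nonneg _)]
  have hmeas : ∀ t ∈ Set.Ioi (0:ℝ),
      (ν d {a | t < univ.inf' hne fun i => |a i|}).toReal = (2 * max (1 - t) 0) ^ d := by
    intro t ht
    have hset : {a : Fin d → ℝ | t < univ.inf' hne fun i => |a i|}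
        = Set.pi Set.univ fun _ : Fin d => {y : ℝ | t < |y|} := by
      ext a
      simp only [Set.mem_setOf_eq, Finset.lt_inf'_iff, Set.mem_pi, Set.mem_univ,
        true_implies]
      exact ⟨fun h i => h i (mem_univ i), fun h i _ => h i⟩
    have hone : κ {y : ℝ | t < |y|} = 2 * ENNReal.ofReal (1 - t) := by
      rw [Measure.restrict_apply (measurableSet_lt measurable_const measurable_abs)]
      have hid : {y : ℝ | t < |y|} ∩ Set.Icc (-1:ℝ) 1
          = Set.Ico (-1:ℝ) (-t) ∪ Set.Ioc t 1 := by
        ext y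
        simp only [Set.mem_inter_iff, Set.mem_setOf_eq, Set.mem_Icc, Set.mem_union,
          Set.mem_Ico, Set.mem_Ioc, lt_abs]
        constructor
        · rintro ⟨h | h, h1, h2⟩
          · exact Or.inr ⟨h, h2⟩
          · exact Or.inl ⟨h1, by linarith⟩
        · rintro (⟨h1, h2⟩ | ⟨h1, h2⟩)
          · have ht' : (0:ℝ) < t := ht
            exact ⟨Or.inr (by linarith), h1, by linarith⟩
          · have ht' : (0:ℝ) < t := ht
            exact ⟨Or.inl h1, by linarith, h2⟩
      rw [hid, measure_union ?hdis measurableSet_Ioc, Real.volume_Ico, Real.volume_Ioc]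
      case hdis =>
        refine Set.disjoint_left.mpr fun y hy hy' => ?_
        have ht' : (0:ℝ) < t := ht
        have := hy.2
        have := hy'.1
        linarith
      rw [show -t - -1 = 1 - t by ring, two_mul]
    rw [hset, Measure.pi_pi, Finset.prod_const, Finset.card_univ, Fintype.card_fin, hone,
      ENNReal.toReal_pow, ENNReal.toReal_mul, ENNReal.toReal_ofReal']
    norm_num
  simp_rw [measureReal_def]
  rw [setIntegral_congr_fun measurableSet_Ioi hmeas]
  have hind : Set.EqOn (fun t : ℝ => (2 * max (1 - t) 0) ^ d)
      ((Set.Ioc (0:ℝ) 1).indicator fun t : ℝ => (2 * max (1 - t) 0) ^ d) (Set.Ioi 0) := by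
    intro t ht
    by_cases h : t ≤ 1
    · rw [Set.indicator_of_mem (Set.mem_Ioc.mpr ⟨ht, h⟩)]
    · rw [Set.indicator_of_notMem (fun hc => h hc.2)]
      push_neg at h
      have : max (1 - t) 0 = 0 := max_eq_right (by linarith)
      simp [this, hd.ne', zero_pow]
  rw [setIntegral_congr_fun measurableSet_Ioi hind,
    setIntegral_indicator measurableSet_Ioc,
    show Set.Ioi (0:ℝ) ∩ Set.Ioc 0 1 = Set.Ioc 0 1 by
      rw [Set.inter_eq_self_of_subset_right]; exact fun y hy => hy.1,
    ← intervalIntegral.integral_of_le zero_le_one]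
  have := intervalIntegral.integral_comp_sub_left
    (a := (0:ℝ)) (b := 1) (fun u => (2 * max u 0) ^ d) 1
  norm_num at this
  rw [this]
  have hcong : ∫ x in (0:ℝ)..1, (2 * max x 0) ^ d = ∫ x in (0:ℝ)..1, 2 ^ d * x ^ d := by
    refine intervalIntegral.integral_congr fun y hy => ?_
    rw [Set.uIcc_of_le zero_le_one] at hy
    rw [max_eq_left hy.1, mul_pow]
  rw [hcong, intervalIntegral.integral_const_mul, integral_pow]
  push_cast
  ring

lemma measurable_P : Measurable fun x : Fin d → ℝ => ∏ i, if x i < 0 then (-1:ℝ) else 1 :=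
  Finset.measurable_prod univ fun i _ =>
    Measurable.ite (measurableSet_lt (measurable_pi_apply i) measurable_const)
      measurable_const measurable_const

lemma kappa_neg : MeasurePreserving (fun y : ℝ => -y) κ κ := by
  refine ⟨measurable_neg, ?_⟩
  have hpre : (Neg.neg : ℝ → ℝ) ⁻¹' (Set.Icc (-1:ℝ) 1) = Set.Icc (-1:ℝ) 1 := by
    ext y
    simp only [Set.mem_preimage, Set.mem_Icc]
    constructor <;> rintro ⟨a, b⟩ <;> constructor <;> linarith
  calc Measure.map (fun y : ℝ => -y) κ
      = Measure.map Neg.neg (volume.restrict (Neg.neg ⁻¹' Set.Icc (-1:ℝ) 1)) := by rw [hpre]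
    _ = (Measure.map Neg.neg volume).restrict (Set.Icc (-1:ℝ) 1) :=
        (Measure.restrict_map measurable_neg measurableSet_Icc).symm
    _ = κ := by rw [Measure.map_neg_eq_self]

lemma int_odd (hd : 0 < d) (hne : (univ : Finset (Fin d)).Nonempty) :
    ∫ x, (∏ i, if x i < 0 then (-1:ℝ) else 1) * (univ.inf' hne fun i => |x i|) ∂(ν d)
      = 0 := by
  set i₀ : Fin d := ⟨0, hd⟩ with hi₀
  set f : Fin d → ℝ → ℝ := fun j y => if j = i₀ then -y else y with hf
  have hfmp : ∀ j, MeasurePreserving (f j) κ κ := by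
    intro j
    by_cases h : j = i₀
    · have : f j = fun y => -y := funext fun y => by rw [hf]; exact if_pos h
      rw [this]; exact kappa_neg
    · have : f j = fun y => y := funext fun y => by rw [hf]; exact if_neg h
      rw [this]; exact MeasurePreserving.id κ
  have hT : MeasurePreserving (fun x : Fin d → ℝ => fun j => f j (x j)) (ν d) (ν d) :=
    MeasureTheory.measurePreserving_pi _ _ hfmp
  have hinv : ∀ x : Fin d → ℝ, (fun j => f j ((fun j' => f j' (x j')) j)) = x := by
    intro x
    funext j
    rw [hf]
    dsimp only
    split_ifs <;> simp
  let e : (Fin d → ℝ) ≃ᵐ (Fin d → ℝ) :=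
    { toFun := fun x j => f j (x j)
      invFun := fun x j => f j (x j)
      left_inv := hinv
      right_inv := hinv
      measurable_toFun := hT.measurable
      measurable_invFun := hT.measurable }
  set F : (Fin d → ℝ) → ℝ :=
    fun x => (∏ i, if x i < 0 then (-1:ℝ) else 1) * (univ.inf' hne fun i => |x i|) with hF
  have hcomp : ∫ x, F (fun j => f j (x j)) ∂(ν d) = ∫ x, F x ∂(ν d) :=
    hT.integral_comp e.measurableEmbedding F
  have hnull : ν d {x : Fin d → ℝ | x i₀ = 0} = 0 := by
    have h1 : {x : Fin d → ℝ | x i₀ = 0} = (fun x : Fin d → ℝ => x i₀) ⁻¹' {0} := rfl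
    rw [h1, ← Measure.map_apply (measurable_pi_apply i₀) (measurableSet_singleton 0), R2]
    have h2 : κ {(0:ℝ)} = 0 := by
      rw [Measure.restrict_apply (measurableSet_singleton 0)]
      exact measure_mono_null Set.inter_subset_left (Real.volume_singleton)
    simp [h2]
  have hae : ∀ᵐ x ∂(ν d), F (fun j => f j (x j)) = -F x := by
    have hq : ∀ᵐ x ∂(ν d), x i₀ ≠ 0 := by
      rw [ae_iff]
      convert hnull using 2
      ext x
      simp
    filter_upwards [hq] with x hx
    have hTx : ∀ j, f j (x j) = if j = i₀ then -(x j) else x j := fun j => rfl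
    have hm' : (univ.inf' hne fun i => |f i (x i)|) = univ.inf' hne fun i => |x i| := by
      refine Finset.inf'_congr hne rfl fun i _ => ?_
      rw [hTx i]
      split_ifs <;> simp
    have hP' : (∏ i, if f i (x i) < 0 then (-1:ℝ) else 1)
        = -∏ i, if x i < 0 then (-1:ℝ) else 1 := by
      rw [← Finset.mul_prod_erase univ (fun i => if f i (x i) < 0 then (-1:ℝ) else 1)
          (mem_univ i₀),
        ← Finset.mul_prod_erase univ (fun i => if x i < 0 then (-1:ℝ) else 1) (mem_univ i₀)]
      have h1 : (if f i₀ (x i₀) < 0 then (-1:ℝ) else 1) = -(if x i₀ < 0 then (-1:ℝ) else 1) := by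
        rw [hTx i₀, if_pos rfl]
        rcases hx.lt_or_gt with h | h
        · rw [if_pos h, if_neg (by linarith : ¬ -x i₀ < 0)]; norm_num
        · rw [if_neg (by linarith : ¬ x i₀ < 0), if_pos (by linarith : -x i₀ < 0)]
      have h2 : ∀ i ∈ univ.erase i₀,
          (if f i (x i) < 0 then (-1:ℝ) else 1) = (if x i < 0 then (-1:ℝ) else 1) := by
        intro i hi
        rw [hTx i, if_neg (Finset.mem_erase.mp hi).1]
      rw [Finset.prod_congr rfl h2, h1]
      ring
    rw [hF]
    dsimp only
    rw [hP', hm']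
    ring
  have h0 : ∫ x, F x ∂(ν d) = -∫ x, F x ∂(ν d) := by
    conv_lhs => rw [← hcomp]
    rw [integral_congr_ae hae, integral_neg]
  linarith

lemma integrable_P_mm (hne : (univ : Finset (Fin d)).Nonempty) :
    Integrable (fun x : Fin d → ℝ =>
      (∏ i, if x i < 0 then (-1:ℝ) else 1) * (univ.inf' hne fun i => |x i|)) (ν d) := by
  refine Integrable.mono' (integrable_const 1)
    (measurable_P.mul (measurable_mm hne)).aestronglyMeasurable ?_
  filter_upwards [ae_mem_S] with x hx
  have habs : |∏ i, if x i < 0 then (-1:ℝ) else 1| = 1 := by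
    rw [Finset.abs_prod]
    rw [Finset.prod_congr rfl fun i _ => (by split_ifs <;> norm_num :
      |if x i < 0 then (-1:ℝ) else 1| = 1)]
    simp
  obtain ⟨i, -⟩ := id hne
  have h1 : (univ.inf' hne fun i => |x i|) ≤ |x i| := Finset.inf'_le _ (mem_univ i)
  have h2 : |x i| ≤ 1 := abs_le.mpr ⟨(hx i trivial).1, (hx i trivial).2⟩
  have h3 : 0 ≤ univ.inf' hne fun i => |x i| :=
    Finset.le_inf' hne _ fun j _ => abs_nonneg _
  rw [Real.norm_eq_abs, abs_mul, habs, one_mul, abs_of_nonneg h3]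
  linarith

lemma integral_G (hd : 0 < d) (hne : (univ : Finset (Fin d)).Nonempty) (δ : ℝ) :
    ∫ x, (∑ i, x i ^ 2 + d * δ ^ 2 - 2 * δ * ∑ i, |x i|
        + 2 * δ * (1 - ∏ i, if x i < 0 then (-1:ℝ) else 1)
          * (univ.inf' hne fun i => |x i|)) ∂(ν d)
      = 2 ^ d * (d * δ ^ 2 - d * δ + d / 3 + 2 * δ / (d + 1)) := by
  have hsq : Integrable (fun y : ℝ => y ^ 2) κ := (continuous_pow 2).integrableOn_Icc
  have habs : Integrable (fun y : ℝ => |y|) κ := continuous_abs.integrableOn_Icc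
  have h1 : Integrable (fun x : Fin d → ℝ => ∑ i, x i ^ 2) (ν d) :=
    integrable_finset_sum _ fun i _ =>
      integrable_eval i (fun y => y ^ 2) (measurable_id.pow_const 2) hsq
  have h2 : Integrable (fun x : Fin d → ℝ => ∑ i, |x i|) (ν d) :=
    integrable_finset_sum _ fun i _ =>
      integrable_eval i (fun y => |y|) measurable_abs habs
  have h0 : Integrable (fun _ : Fin d → ℝ => (d : ℝ) * δ ^ 2) (ν d) := integrable_const _
  have h3 := integrable_mm hne
  have h4 := integrable_P_mm hne
  have expand : (fun x : Fin d → ℝ => ∑ i, x i ^ 2 + d * δ ^ 2 - 2 * δ * ∑ i, |x i|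
        + 2 * δ * (1 - ∏ i, if x i < 0 then (-1:ℝ) else 1)
          * (univ.inf' hne fun i => |x i|))
      = fun x : Fin d → ℝ => (∑ i, x i ^ 2) + ((d : ℝ) * δ ^ 2)
          + (-(2 * δ)) * (∑ i, |x i|) + (2 * δ) * (univ.inf' hne fun i => |x i|)
          + (-(2 * δ)) * ((∏ i, if x i < 0 then (-1:ℝ) else 1)
              * (univ.inf' hne fun i => |x i|)) := by
    funext x
    ring
  rw [expand]
  have HA : Integrable (fun x : Fin d → ℝ => (∑ i, x i ^ 2) + (d : ℝ) * δ ^ 2) (ν d) :=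
    h1.add h0
  have HB : Integrable (fun x : Fin d → ℝ =>
      (∑ i, x i ^ 2) + (d : ℝ) * δ ^ 2 + (-(2 * δ)) * ∑ i, |x i|) (ν d) :=
    HA.add (h2.const_mul _)
  have HC : Integrable (fun x : Fin d → ℝ =>
      (∑ i, x i ^ 2) + (d : ℝ) * δ ^ 2 + (-(2 * δ)) * ∑ i, |x i|
        + (2 * δ) * (univ.inf' hne fun i => |x i|)) (ν d) :=
    HB.add (h3.const_mul _)
  rw [integral_add HC (h4.const_mul _),
    integral_add HB (h3.const_mul _),
    integral_add HA (h2.const_mul _),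
    integral_add h1 h0,
    integral_const_mul, integral_const_mul, integral_const_mul, integral_const_mul, integral_const,
    integral_finset_sum _ (fun i _ =>
      integrable_eval i (fun y => y ^ 2) (measurable_id.pow_const 2) hsq),
    integral_finset_sum _ (fun i _ =>
      integrable_eval i (fun y => |y|) measurable_abs habs),
    int_min hd hne, int_odd hd hne]
  rw [Finset.sum_congr rfl fun (i : Fin d) _ =>
      (integral_eval i (fun y => y ^ 2) (measurable_id.pow_const 2)).trans (by rw [int_sq]),
    Finset.sum_congr rfl fun (i : Fin d) _ =>
      (integral_eval i (fun y => |y|) measurable_abs).trans (by rw [int_abs]),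
    Finset.sum_const, Finset.sum_const, Finset.card_univ, Fintype.card_fin]
  have hν : (ν d).real Set.univ = 2 ^ d := by
    rw [measureReal_def, nu_univ]
    simp
  rw [hν]
  have h2d : (2:ℝ) ^ d = 2 ^ (d - 1) * 2 := by
    rw [← pow_succ, Nat.sub_add_cancel hd]
  have hd1 : ((d:ℝ) + 1) ≠ 0 := by positivity
  rw [smul_eq_mul, nsmul_eq_mul, nsmul_eq_mul, h2d]
  field_simp
  ring

lemma nu_coord_zero {d : ℕ} (i : Fin d) : ν d {x : Fin d → ℝ | x i = 0} = 0 := by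
  have h1 : {x : Fin d → ℝ | x i = 0} = (fun x : Fin d → ℝ => x i) ⁻¹' {0} := rfl
  rw [h1, ← Measure.map_apply (measurable_pi_apply i) (measurableSet_singleton 0), R2]
  have h2 : κ {(0:ℝ)} = 0 := by
    rw [Measure.restrict_apply (measurableSet_singleton 0)]
    exact measure_mono_null Set.inter_subset_left Real.volume_singleton
  simp [h2]

lemma quantErr_eq {d : ℕ} (hd : 2 ≤ d) (δ : ℝ) (hδ0 : 0 < δ) :
    quantErr d (design d δ) = d * δ ^ 2 - d * δ + d / 3 + 2 * δ / (d + 1) := by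
  classical
  have hd0 : 0 < d := by omega
  have hne : (univ : Finset (Fin d)).Nonempty := ⟨⟨0, hd0⟩, mem_univ _⟩
  rw [quantErr]
  set e := (MeasurableEquiv.toLp 2 (Fin d → ℝ)).symm with he
  have hmp := (EuclideanSpace.volume_preserving_symm_measurableEquiv_toLp (Fin d)).symm
  have happly : ∀ (y : Fin d → ℝ) (i : Fin d), (e.symm y) i = y i := by
    intro y i
    rfl
  have hpre : ⇑e.symm ⁻¹' (cube d) = Set.pi Set.univ fun _ : Fin d => Set.Icc (-1:ℝ) 1 := by
    ext y
    simp only [Set.mem_preimage, cube, Set.mem_setOf_eq, Set.mem_pi, Set.mem_univ, true_implies]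
    constructor
    · intro h i; rw [← happly y i]; exact h i
    · intro h i; rw [happly y i]; exact h i
  have htrans := hmp.setIntegral_preimage_emb (MeasurableEquiv.measurableEmbedding e.symm)
      (fun x => ⨅ z : design d δ, ‖x - (z : EuclideanSpace ℝ (Fin d))‖ ^ 2) (cube d)
  rw [← htrans, hpre, R1]
  have hae : (fun y : Fin d → ℝ =>
        ⨅ z : design d δ, ‖e.symm y - (z : EuclideanSpace ℝ (Fin d))‖ ^ 2)
      =ᵐ[ν d] (fun y : Fin d → ℝ => ∑ i, y i ^ 2 + d * δ ^ 2 - 2 * δ * ∑ i, |y i|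
        + 2 * δ * (1 - ∏ i, if y i < 0 then (-1:ℝ) else 1)
          * (univ.inf' hne fun i => |y i|)) := by
    have hy : ∀ᵐ y ∂(ν d), ∀ i, y i ≠ 0 := by
      rw [ae_all_iff]
      intro i
      rw [ae_iff]
      convert nu_coord_zero i using 2
      ext y
      simp
    filter_upwards [hy] with y hy
    have hx : ∀ i, (e.symm y) i ≠ 0 := fun i => by rw [happly]; exact hy i
    rw [iInf_design hd0 δ hδ0 (e.symm y) hx hne]
    simp only [happly]
  rw [integral_congr_ae hae, integral_G hd0 hne δ,
    mul_div_cancel_left₀ _ (by positivity : ((2:ℝ)^d) ≠ 0)]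

theorem stmt4 (d : ℕ) (hd : 2 ≤ d) (δ : ℝ) (hδ0 : 0 < δ) (hδ1 : δ ≤ 1) (n : ℕ)
    (hn : n = 2 ^ (d - 1)) :
    (n : ℝ) ^ ((2 : ℝ) / d) * quantErr d (design d δ) / (4 * d) =
      (2 : ℝ) ^ (-(2 : ℝ) / d) * (δ ^ 2 - δ + 1 / 3 + 2 * δ / (d * (d + 1))) := by
  subst hn
  rw [quantErr_eq hd δ hδ0]
  have hdR : (0:ℝ) < d := by exact_mod_cast Nat.lt_of_lt_of_le Nat.zero_lt_two hd
  have hcast : ((2 ^ (d-1) : ℕ) : ℝ) = (2:ℝ) ^ (d-1) := by push_cast; ring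
  rw [hcast, ← Real.rpow_natCast (2:ℝ) (d-1), ← Real.rpow_mul (by norm_num : (0:ℝ) ≤ 2)]
  have hmul : ((d-1 : ℕ) : ℝ) * ((2:ℝ)/d) = 2 + -(2:ℝ)/d := by
    rw [Nat.cast_sub (by omega : 1 ≤ d)]
    field_simp
    ring
  rw [hmul, Real.rpow_add (by norm_num : (0:ℝ) < 2)]
  have h2 : (2:ℝ) ^ (2:ℝ) = 4 := by
    rw [show (2:ℝ) = ((2:ℕ):ℝ) by norm_num, Real.rpow_natCast]
    norm_num
  rw [h2]
  have hd1 : ((d:ℝ) + 1) ≠ 0 := by positivity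
  field_simp

end
end

section
/- Let d ≥ 2 be an integer and δ ∈ ℝ. Then ∫_{U_1} ‖x − δ·1‖² dx = δ² − δ + 1/3 + 4δ/(d(d+1)), where the integral is with respect to d-dimensional Lebesgue measure. -/
open MeasureTheory Filter

noncomputable section

open Set


-- box integral of a composed coordinate function
private lemma box_comp (n : ℕ) (a b : ℝ) (hab : a ≤ b) (f : ℝ → ℝ) (j : Fin n) :
    ∫ y in Set.pi Set.univ (fun _ : Fin n => Set.Icc a b), f (y j) =
      (b - a) ^ (n - 1) * ∫ u in Set.Icc a b, f u := by
  classical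
  have hbox : MeasurableSet (Set.pi Set.univ (fun _ : Fin n => Set.Icc a b)) :=
    MeasurableSet.univ_pi fun _ => measurableSet_Icc
  rw [← integral_indicator hbox]
  have hpt : (Set.pi Set.univ (fun _ : Fin n => Set.Icc a b)).indicator (fun y => f (y j)) =
      fun y : Fin n → ℝ => ∏ k, (if k = j then (Set.Icc a b).indicator f (y k)
        else (Set.Icc a b).indicator (fun _ => (1:ℝ)) (y k)) := by
    funext y
    by_cases hy : y ∈ Set.pi Set.univ (fun _ : Fin n => Set.Icc a b)
    · rw [Set.indicator_of_mem hy]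
      have : ∀ k : Fin n, (if k = j then (Set.Icc a b).indicator f (y k)
          else (Set.Icc a b).indicator (fun _ => (1:ℝ)) (y k)) =
          if k = j then f (y j) else 1 := by
        intro k
        by_cases hk : k = j <;>
          simp [hk, Set.indicator_of_mem (hy k (Set.mem_univ k)), Set.indicator_of_mem (hy _ (Set.mem_univ _))]
      rw [Finset.prod_congr rfl (fun k _ => this k), Finset.prod_ite_eq' Finset.univ j _]
      simp
    · rw [Set.indicator_of_notMem hy]
      simp only [Set.mem_pi, Set.mem_univ, forall_true_left, not_forall] at hy
      obtain ⟨k₀, hk₀⟩ := hy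
      refine (Finset.prod_eq_zero (Finset.mem_univ k₀) ?_).symm
      by_cases hk : k₀ = j
      · subst hk; rw [if_pos rfl, Set.indicator_of_notMem hk₀]
      · rw [if_neg hk, Set.indicator_of_notMem hk₀]
  rw [hpt, MeasureTheory.integral_fintype_prod_volume_eq_prod
    (fun k u => if k = j then (Set.Icc a b).indicator f u else (Set.Icc a b).indicator (fun _ => (1:ℝ)) u)]
  have hval : ∀ k : Fin n, (∫ u, if k = j then (Set.Icc a b).indicator f u
      else (Set.Icc a b).indicator (fun _ => (1:ℝ)) u) =
      if k = j then ∫ u in Set.Icc a b, f u else (b - a) := by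
    intro k
    by_cases hk : k = j
    · simp only [if_pos hk]
      rw [integral_indicator measurableSet_Icc]
    · simp only [if_neg hk]
      rw [MeasureTheory.integral_indicator_const (1:ℝ) measurableSet_Icc]
      simp [Real.volume_Icc, ENNReal.toReal_ofReal (sub_nonneg.2 hab), hab]
  rw [Finset.prod_congr rfl (fun k _ => hval k),
    ← Finset.mul_prod_erase Finset.univ _ (Finset.mem_univ j), if_pos rfl,
    Finset.prod_congr rfl (fun k hk => if_neg (Finset.ne_of_mem_erase hk)),
    Finset.prod_const, Finset.card_erase_of_mem (Finset.mem_univ j), Finset.card_univ,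
    Fintype.card_fin]
  ring

private lemma slice9x (n : ℕ) (a t δ : ℝ) (ha : a ≤ 1) :
    ∫ y in Set.pi Set.univ (fun _ : Fin n => Set.Icc a 1),
        ((t - δ) ^ 2 + ∑ j, (y j - δ) ^ 2) =
      (1 - a) ^ n * (t - δ) ^ 2 + n * (1 - a) ^ (n - 1) * ∫ u in Set.Icc a 1, (u - δ) ^ 2 := by
  have hbox : MeasurableSet (Set.pi Set.univ (fun _ : Fin n => Set.Icc a (1:ℝ))) :=
    MeasurableSet.univ_pi fun _ => measurableSet_Icc
  have hcomp : IsCompact (Set.pi Set.univ (fun _ : Fin n => Set.Icc a (1:ℝ))) :=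
    isCompact_univ_pi fun _ => isCompact_Icc
  have hint : ∀ j : Fin n, IntegrableOn (fun y : Fin n → ℝ => (y j - δ) ^ 2)
      (Set.pi Set.univ (fun _ : Fin n => Set.Icc a 1)) := fun j =>
    ((((continuous_apply j).sub continuous_const).pow 2).continuousOn).integrableOn_compact hcomp
  rw [integral_add (integrableOn_const hcomp.measure_lt_top.ne).integrable
      (integrable_finset_sum _ fun j _ => hint j),
    integral_finset_sum _ (fun j _ => hint j), setIntegral_const]
  have hvol : volume (Set.pi Set.univ (fun _ : Fin n => Set.Icc a (1:ℝ))) =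
      ENNReal.ofReal (1 - a) ^ n := by
    rw [volume_pi_pi]
    simp [Real.volume_Icc]
  rw [measureReal_def, hvol]
  have : ∀ j : Fin n, (∫ y in Set.pi Set.univ (fun _ : Fin n => Set.Icc a 1),
      (y j - δ) ^ 2) = (1 - a) ^ (n - 1) * ∫ u in Set.Icc a 1, (u - δ) ^ 2 :=
    fun j => box_comp n a 1 ha (fun u => (u - δ) ^ 2) j
  rw [Finset.sum_congr rfl (fun j _ => this j), Finset.sum_const, Finset.card_univ,
    Fintype.card_fin]
  simp [ENNReal.toReal_pow, ENNReal.toReal_ofReal (sub_nonneg.2 ha), smul_eq_mul]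
  ring

private lemma Ipow (k : ℕ) : ∫ t in (-1:ℝ)..0, (t + 1) ^ k = 1 / (k + 1) := by
  rw [intervalIntegral.integral_comp_add_right (fun s => s ^ k) 1]
  norm_num [integral_pow]

private lemma outer9 (m : ℕ) (δ : ℝ) :
    ∫ t in (-1:ℝ)..0, ((1 + t) ^ (m + 1) * (t - δ) ^ 2 +
        (m + 1) * (1 + t) ^ m * (((1 - δ) ^ 3 - (-t - δ) ^ 3) / 3)) =
      δ ^ 2 - δ + 1 / 3 + 4 * δ / ((m + 2) * (m + 3)) := by
  have key : ∀ t : ℝ, (1 + t) ^ (m + 1) * (t - δ) ^ 2 +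
      (m + 1) * (1 + t) ^ m * (((1 - δ) ^ 3 - (-t - δ) ^ 3) / 3) =
      ((1 + δ) ^ 2 + (m + 1) * (1 - δ) ^ 2) * (t + 1) ^ (m + 1) +
        (-(2 * (1 + δ) + (m + 1) * (1 - δ))) * (t + 1) ^ (m + 2) +
        (1 + (m + 1) / 3) * (t + 1) ^ (m + 3) := by
    intro t
    have h1 : (t + 1) ^ (m + 1) = (t + 1) ^ m * (t + 1) := pow_succ _ _
    have h2 : (t + 1) ^ (m + 2) = (t + 1) ^ m * (t + 1) ^ 2 := by
      rw [pow_add]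
    have h3 : (t + 1) ^ (m + 3) = (t + 1) ^ m * (t + 1) ^ 3 := by
      rw [pow_add]
    have h4 : (1 + t) ^ (m + 1) = (t + 1) ^ m * (t + 1) := by
      rw [add_comm 1 t, pow_succ]
    have h5 : (1 + t) ^ m = (t + 1) ^ m := by rw [add_comm]
    rw [h1, h2, h3, h4, h5]
    ring
  rw [intervalIntegral.integral_congr (fun t _ => key t)]
  have i1 : IntervalIntegrable (fun t : ℝ =>
      ((1 + δ) ^ 2 + (m + 1) * (1 - δ) ^ 2) * (t + 1) ^ (m + 1)) volume (-1) 0 :=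
    (Continuous.intervalIntegrable (by continuity) _ _)
  have i2 : IntervalIntegrable (fun t : ℝ =>
      (-(2 * (1 + δ) + (m + 1) * (1 - δ))) * (t + 1) ^ (m + 2)) volume (-1) 0 :=
    (Continuous.intervalIntegrable (by continuity) _ _)
  have i3 : IntervalIntegrable (fun t : ℝ =>
      (1 + (m + 1) / 3) * (t + 1) ^ (m + 3)) volume (-1) 0 :=
    (Continuous.intervalIntegrable (by continuity) _ _)
  rw [intervalIntegral.integral_add (i1.add i2) i3, intervalIntegral.integral_add i1 i2,
    intervalIntegral.integral_const_mul, intervalIntegral.integral_const_mul,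
    intervalIntegral.integral_const_mul, Ipow, Ipow, Ipow]
  have hm2 : (m : ℝ) + 2 ≠ 0 := by positivity
  have hm3 : (m : ℝ) + 3 ≠ 0 := by positivity
  have hm4 : (m : ℝ) + 4 ≠ 0 := by positivity
  push_cast
  field_simp
  ring

open MeasureTheory Filter Set

noncomputable section


theorem stmt6 (d : ℕ) (hd : 2 ≤ d) (δ : ℝ) :
    ∫ x in U d ⟨0, by omega⟩, ‖x - const d δ‖ ^ 2 =
      δ ^ 2 - δ + 1 / 3 + 4 * δ / (d * (d + 1)) := by
  obtain ⟨m, rfl⟩ : ∃ m, d = m + 2 := ⟨d - 2, by omega⟩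
  have hnorm : ∀ x : EuclideanSpace ℝ (Fin (m+2)), ‖x - const (m+2) δ‖ ^ 2
      = ∑ i, (x i - δ) ^ 2 := by
    intro x
    rw [EuclideanSpace.norm_eq, Real.sq_sqrt (by positivity)]
    congr 1; funext i
    simp [const, Real.norm_eq_abs, sq_abs]
  simp only [hnorm]
  -- transfer to pi space
  have hE : MeasurePreserving (MeasurableEquiv.toLp 2 (Fin (m+2) → ℝ)) := PiLp.volume_preserving_toLp _
  rw [← hE.setIntegral_preimage_emb (MeasurableEquiv.measurableEmbedding _)
    (fun x => ∑ i, (x i - δ) ^ 2) _]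
  have hP := (MeasureTheory.volume_preserving_piFinSuccAbove (fun _ : Fin (m+2) => ℝ) 0).symm
  rw [← hP.setIntegral_preimage_emb (MeasurableEquiv.measurableEmbedding _) _ _]
  set T : Set (ℝ × (Fin (m+1) → ℝ)) :=
    {p | p.1 ∈ Set.Icc (-1:ℝ) 0 ∧ p.2 ∈ Set.pi Set.univ fun _ => Set.Icc (-p.1) (1:ℝ)} with hT
  have hset : (MeasurableEquiv.piFinSuccAbove (fun _ : Fin (m+2) => ℝ) 0).symm ⁻¹'
      ((MeasurableEquiv.toLp 2 (Fin (m+2) → ℝ)) ⁻¹' (U (m+2) ⟨0, by omega⟩)) = T := by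
    ext ⟨t, y⟩
    simp only [Set.mem_preimage, MeasurableEquiv.piFinSuccAbove_symm_apply,
      Fin.insertNthEquiv_zero, Fin.consEquiv_apply, MeasurableEquiv.toLp_apply,
      PiLp.toLp_apply, U, Set.mem_setOf_eq, hT, Set.mem_Icc, Set.mem_pi,
      Set.mem_univ, forall_true_left]
    have h0 : (⟨0, by omega⟩ : Fin (m+2)) = 0 := rfl
    rw [h0]
    simp only [Fin.cons_zero]
    constructor
    · rintro ⟨h1, h2, h3⟩
      refine ⟨⟨h1, h2⟩, fun j => ?_⟩
      have h4 := h3 j.succ (Fin.succ_ne_zero j)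
      rwa [Fin.cons_succ, abs_of_nonpos h2] at h4
    · rintro ⟨⟨h1, h2⟩, h3⟩
      refine ⟨h1, h2, fun k hk => ?_⟩
      induction k using Fin.cases with
      | zero => exact absurd rfl hk
      | succ j => rw [Fin.cons_succ]; rw [abs_of_nonpos h2]; exact h3 j
  rw [hset]
  have hintg : ∀ p : ℝ × (Fin (m+1) → ℝ),
      ∑ i : Fin (m+2), ((MeasurableEquiv.toLp 2 (Fin (m+2) → ℝ))
        ((MeasurableEquiv.piFinSuccAbove (fun _ => ℝ) 0).symm p) i - δ) ^ 2 =
      (p.1 - δ) ^ 2 + ∑ j, (p.2 j - δ) ^ 2 := by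
    rintro ⟨t, y⟩
    simp only [MeasurableEquiv.piFinSuccAbove_symm_apply, Fin.insertNthEquiv_zero,
      Fin.consEquiv_apply, MeasurableEquiv.toLp_apply, PiLp.toLp_apply]
    rw [Fin.sum_univ_succ]
    simp [Fin.cons_zero, Fin.cons_succ]
  simp only [hintg]
  set F : ℝ × (Fin (m+1) → ℝ) → ℝ := fun p => (p.1 - δ) ^ 2 + ∑ j, (p.2 j - δ) ^ 2 with hF
  have hbox : ∀ t : ℝ, MeasurableSet (Set.pi Set.univ fun _ : Fin (m+1) => Set.Icc (-t) (1:ℝ)) :=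
    fun t => MeasurableSet.univ_pi fun _ => measurableSet_Icc
  have hTclosed : IsClosed T := by
    have hTeq : T = ({p : ℝ × (Fin (m+1) → ℝ) | -1 ≤ p.1} ∩ {p | p.1 ≤ 0}) ∩
        ⋂ j : Fin (m+1), ({p : ℝ × (Fin (m+1) → ℝ) | -p.1 ≤ p.2 j} ∩ {p | p.2 j ≤ 1}) := by
      ext p
      simp only [hT, Set.mem_setOf_eq, Set.mem_inter_iff, Set.mem_iInter, Set.mem_Icc,
        Set.mem_pi, Set.mem_univ, forall_true_left] <;> tauto
    rw [hTeq]
    refine ((isClosed_le continuous_const continuous_fst).inter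
      (isClosed_le continuous_fst continuous_const)).inter (isClosed_iInter fun j => ?_)
    exact (isClosed_le (by fun_prop) (by fun_prop)).inter
      (isClosed_le (by fun_prop) (by fun_prop))
  have hTmeas : MeasurableSet T := hTclosed.measurableSet
  have hK : IsCompact ((Set.Icc (-1:ℝ) 0) ×ˢ
      (Set.pi Set.univ fun _ : Fin (m+1) => Set.Icc (0:ℝ) 1)) :=
    isCompact_Icc.prod (isCompact_univ_pi fun _ => isCompact_Icc)
  have hTK : T ⊆ (Set.Icc (-1:ℝ) 0) ×ˢ
      (Set.pi Set.univ fun _ : Fin (m+1) => Set.Icc (0:ℝ) 1) := by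
    rintro ⟨t, y⟩ ⟨⟨h1, h2⟩, hy⟩
    refine ⟨⟨h1, h2⟩, fun j _ => ?_⟩
    have := hy j (Set.mem_univ j)
    exact ⟨by linarith [this.1], this.2⟩
  have hFc : Continuous F := by
    apply Continuous.add
    · exact (continuous_fst.sub continuous_const).pow 2
    · exact continuous_finset_sum _ fun j _ =>
        (((continuous_apply j).comp continuous_snd).sub continuous_const).pow 2
  have hFint : Integrable (T.indicator F) volume := by
    rw [integrable_indicator_iff hTmeas]
    exact (hFc.continuousOn.integrableOn_compact hK).mono_set hTK
  rw [← integral_indicator hTmeas, Measure.volume_eq_prod,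
    integral_prod _ (by rwa [← Measure.volume_eq_prod])]
  have hinner : ∀ t : ℝ, (∫ y, T.indicator F (t, y)) =
      (Set.Icc (-1:ℝ) 0).indicator (fun t' => ∫ y in Set.pi Set.univ
        fun _ : Fin (m+1) => Set.Icc (-t') 1, ((t' - δ) ^ 2 + ∑ j, (y j - δ) ^ 2)) t := by
    intro t
    by_cases ht : t ∈ Set.Icc (-1:ℝ) 0
    · rw [Set.indicator_of_mem ht, ← integral_indicator (hbox t)]
      congr 1; funext y
      by_cases hy : y ∈ Set.pi Set.univ fun _ : Fin (m+1) => Set.Icc (-t) (1:ℝ)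
      · rw [Set.indicator_of_mem hy, Set.indicator_of_mem (show (t, y) ∈ T from ⟨ht, hy⟩)]
      · rw [Set.indicator_of_notMem hy, Set.indicator_of_notMem (fun h => hy h.2)]
    · rw [Set.indicator_of_notMem ht]
      have hz : ∀ y : Fin (m+1) → ℝ, T.indicator F (t, y) = 0 :=
        fun y => Set.indicator_of_notMem (fun h => ht h.1) _
      simp only [hz, MeasureTheory.integral_zero]
  simp only [← hF, hinner]
  rw [integral_indicator measurableSet_Icc, MeasureTheory.integral_Icc_eq_integral_Ioc,
    ← intervalIntegral.integral_of_le (by norm_num : (-1:ℝ) ≤ 0)]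
  have hcongr : Set.EqOn (fun t : ℝ => ∫ y in Set.pi Set.univ
        fun _ : Fin (m+1) => Set.Icc (-t) 1, ((t - δ) ^ 2 + ∑ j, (y j - δ) ^ 2))
      (fun t : ℝ => (1 + t) ^ (m + 1) * (t - δ) ^ 2 +
        ((m : ℝ) + 1) * (1 + t) ^ m * (((1 - δ) ^ 3 - (-t - δ) ^ 3) / 3))
      (Set.uIcc (-1 : ℝ) 0) := by
    intro t ht
    rw [Set.uIcc_of_le (by norm_num : (-1:ℝ) ≤ 0)] at ht
    obtain ⟨ht1, ht2⟩ := ht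
    have hIu : ∫ u in Set.Icc (-t) (1:ℝ), (u - δ) ^ 2 =
        ((1 - δ) ^ 3 - (-t - δ) ^ 3) / 3 := by
      rw [MeasureTheory.integral_Icc_eq_integral_Ioc,
        ← intervalIntegral.integral_of_le (by linarith : -t ≤ 1),
        intervalIntegral.integral_comp_sub_right (fun u => u ^ 2) δ, integral_pow]
      norm_num
    show (∫ y in Set.pi Set.univ fun _ : Fin (m+1) => Set.Icc (-t) 1,
        ((t - δ) ^ 2 + ∑ j, (y j - δ) ^ 2)) = _
    rw [slice9x (m+1) (-t) t δ (by linarith), hIu]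
    have h1t : (1 : ℝ) - -t = 1 + t := by ring
    rw [h1t]
    push_cast
    ring_nf
  rw [intervalIntegral.integral_congr hcongr]
  refine (outer9 m δ).trans ?_
  push_cast
  ring_nf


end
end
end

section
/- Let d ≥ 2 and let V = C_0 ∪ ⋃_{j=1}^d U_j ⊂ ℝ^d. Then the centroid of V equals δ*·1, where δ* = 1/2 − 1/(d(d+1)); that is, for every coordinate i, (1/vol(V)) ∫_V x_i dx = 1/2 − 1/(d(d+1)). -/
open MeasureTheory Filter Set

noncomputable section

lemma sIcc_eq (a b : ℝ) (h : a ≤ b) (f : ℝ → ℝ) :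
    ∫ t in Icc a b, f t = ∫ t in a..b, f t := by
  rw [intervalIntegral.integral_of_le h, integral_Icc_eq_integral_Ioc]

lemma intIcc_one (a b : ℝ) (h : a ≤ b) : ∫ _ in Icc a b, (1:ℝ) = b - a := by
  rw [setIntegral_const, measureReal_def, Real.volume_Icc, ENNReal.toReal_ofReal (by linarith)]; simp

lemma intIcc_id (a b : ℝ) (h : a ≤ b) : ∫ t in Icc a b, t = (b^2 - a^2)/2 := by
  rw [sIcc_eq a b h, integral_id]

lemma intD (k : ℕ) : ∫ t in Icc (-1:ℝ) 0, (1+t)^k = 1/(k+1) := by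
  rw [sIcc_eq _ _ (by norm_num), intervalIntegral.integral_comp_add_left (fun u => u^k) 1]
  norm_num [integral_pow]

lemma intE (k : ℕ) : ∫ t in Icc (-1:ℝ) 0, t*(1+t)^k = 1/(k+2) - 1/(k+1) := by
  rw [sIcc_eq _ _ (by norm_num)]
  have h1 : ∀ t : ℝ, t*(1+t)^k = (fun u => u^(k+1) - u^k) (1 + t) := by
    intro t; simp only; ring
  simp_rw [h1]
  rw [intervalIntegral.integral_comp_add_left (fun u => u^(k+1) - u^k) 1,
    intervalIntegral.integral_sub ((continuous_pow _).intervalIntegrable _ _)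
    ((continuous_pow _).intervalIntegrable _ _)]
  norm_num [integral_pow]
  ring

variable {ι : Type*} [Fintype ι] [DecidableEq ι]

lemma boxProd (s : ι → Set ℝ) (hs : ∀ l, MeasurableSet (s l)) (F : ι → ℝ → ℝ) :
    ∫ x in Set.pi Set.univ s, (∏ l, F l (x l)) = ∏ l, ∫ t in s l, F l t := by
  rw [← integral_indicator (MeasurableSet.univ_pi hs)]
  have h1 : ∀ x : ι → ℝ, (Set.pi Set.univ s).indicator (fun x => ∏ l, F l (x l)) x
      = ∏ l, (s l).indicator (F l) (x l) := by
    intro x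
    by_cases hx : x ∈ Set.pi Set.univ s
    · rw [Set.indicator_of_mem hx]
      exact Finset.prod_congr rfl fun l _ =>
        (Set.indicator_of_mem (hx l (Set.mem_univ l)) _).symm
    · rw [Set.indicator_of_notMem hx]
      simp only [Set.mem_univ_pi, not_forall] at hx
      obtain ⟨l, hl⟩ := hx
      exact (Finset.prod_eq_zero (Finset.mem_univ l)
        (by rw [Set.indicator_of_notMem hl])).symm
  simp_rw [h1]
  rw [volume_pi, MeasureTheory.integral_fintype_prod_eq_prod (fun l => (s l).indicator (F l))]
  exact Finset.prod_congr rfl fun l _ => integral_indicator (hs l)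

lemma box_one (a b : ι → ℝ) (h : ∀ l, a l ≤ b l) :
    ∫ _ in Set.pi Set.univ (fun l => Icc (a l) (b l)), (1:ℝ) = ∏ l, (b l - a l) := by
  have := boxProd (fun l => Icc (a l) (b l)) (fun l => measurableSet_Icc)
    (fun _ _ => (1:ℝ))
  simpa [intIcc_one _ _ (h _)] using this

lemma box_eval (a b : ι → ℝ) (h : ∀ l, a l ≤ b l) (k : ι) :
    ∫ x in Set.pi Set.univ (fun l => Icc (a l) (b l)), x k
      = ((b k)^2 - (a k)^2)/2 * ∏ l ∈ Finset.univ.erase k, (b l - a l) := by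
  have := boxProd (fun l => Icc (a l) (b l)) (fun l => measurableSet_Icc)
    (fun l t => if l = k then t else 1)
  simp only [Finset.prod_ite_eq', Finset.mem_univ, if_true] at this
  rw [this, ← Finset.mul_prod_erase Finset.univ _ (Finset.mem_univ k)]
  simp only [if_true]
  rw [intIcc_id _ _ (h k)]
  congr 1
  refine Finset.prod_congr rfl fun l hl => ?_
  simp only [if_neg (Finset.mem_erase.mp hl).1]
  exact intIcc_one _ _ (h l)

variable {ι : Type*} [Fintype ι]

def Sset (ι : Type*) [Fintype ι] : Set (ℝ × (ι → ℝ)) :=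
  {p | p.1 ∈ Icc (-1:ℝ) 0 ∧ ∀ k, p.2 k ∈ Icc (-p.1) 1}

lemma Sset_meas : MeasurableSet (Sset ι) := by
  have h1 : Sset ι = ((fun p : ℝ × (ι → ℝ) => p.1) ⁻¹' Icc (-1:ℝ) 0) ∩
      ⋂ k, ({p : ℝ × (ι → ℝ) | -p.1 ≤ p.2 k} ∩ {p | p.2 k ≤ 1}) := by
    ext p; simp [Sset, forall_and]
  rw [h1]
  refine (measurable_fst (measurableSet_Icc)).inter (MeasurableSet.iInter fun k => ?_)
  have hk : Measurable (fun p : ℝ × (ι → ℝ) => p.2 k) := measurable_snd.eval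
  exact (measurableSet_le measurable_fst.neg hk).inter (measurableSet_le hk measurable_const)

lemma Sset_vol_ne_top : volume (Sset ι) ≠ ⊤ := by
  have hsub : Sset ι ⊆ (Icc (-1:ℝ) 0) ×ˢ Set.pi Set.univ (fun _ : ι => Icc (0:ℝ) 1) := by
    rintro ⟨t, y⟩ ⟨ht, hy⟩
    exact ⟨ht, fun k _ => ⟨le_trans (by linarith [ht.2]) (hy k).1, (hy k).2⟩⟩
  refine ne_top_of_le_ne_top ?_ (measure_mono hsub)
  rw [MeasureTheory.Measure.volume_eq_prod ℝ (ι → ℝ), Measure.prod_prod]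
  exact ENNReal.mul_ne_top (by simp [Real.volume_Icc]) (by
    rw [volume_pi_pi]; exact ENNReal.prod_ne_top fun _ _ => by simp [Real.volume_Icc])

lemma sliceInt (g : ℝ × (ι → ℝ) → ℝ) (hgm : Measurable g)
    (hb : ∀ p ∈ Sset ι, ‖g p‖ ≤ 1) :
    ∫ p in Sset ι, g p =
      ∫ t in Icc (-1:ℝ) 0, ∫ y in Set.pi Set.univ (fun _ : ι => Icc (-t) (1:ℝ)), g (t, y) := by
  have hSm : MeasurableSet (Sset ι) := Sset_meas
  have hInt : IntegrableOn g (Sset ι) volume :=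
    Measure.integrableOn_of_bounded Sset_vol_ne_top hgm.aestronglyMeasurable
      ((ae_restrict_iff' hSm).2 (Filter.Eventually.of_forall hb))
  rw [← integral_indicator hSm]
  rw [show (volume : Measure (ℝ × (ι → ℝ))) = (volume : Measure ℝ).prod volume from rfl]
  rw [MeasureTheory.integral_prod _ (by
    rw [← MeasureTheory.Measure.volume_eq_prod ℝ (ι → ℝ)]
    exact (integrable_indicator_iff hSm).2 hInt)]
  have key : ∀ t : ℝ, (∫ y, (Sset ι).indicator g (t, y)) =
      (Icc (-1:ℝ) 0).indicator (fun t => ∫ y in Set.pi Set.univ (fun _ : ι => Icc (-t) 1),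
        g (t, y)) t := by
    intro t
    by_cases ht : t ∈ Icc (-1:ℝ) 0
    · rw [Set.indicator_of_mem ht]
      have h2 : ∀ y : ι → ℝ, (Sset ι).indicator g (t, y)
          = (Set.pi Set.univ (fun _ : ι => Icc (-t) 1)).indicator (fun y => g (t, y)) y := by
        intro y
        by_cases hy : y ∈ Set.pi Set.univ (fun _ : ι => Icc (-t) 1)
        · rw [Set.indicator_of_mem hy,
            Set.indicator_of_mem (show (t, y) ∈ Sset ι from ⟨ht, fun k => hy k (Set.mem_univ k)⟩)]
        · rw [Set.indicator_of_notMem hy, Set.indicator_of_notMem (fun hmem => hy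
            (fun k _ => hmem.2 k))]
      simp_rw [h2]
      exact integral_indicator (MeasurableSet.univ_pi fun _ => measurableSet_Icc)
    · rw [Set.indicator_of_notMem ht]
      have h2 : ∀ y : ι → ℝ, (Sset ι).indicator g (t, y) = 0 := fun y =>
        Set.indicator_of_notMem (fun hmem => ht hmem.1) _
      simp [h2]
  simp_rw [key]
  exact integral_indicator measurableSet_Icc

lemma box_toReal (m : ℕ) (t : ℝ) (ht : t ∈ Icc (-1:ℝ) 0) :
    (volume (Set.pi Set.univ (fun _ : Fin m => Icc (-t) (1:ℝ)))).toReal = (1+t)^m := by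
  have h := box_one (fun _ : Fin m => -t) (fun _ => 1) (fun _ => by show -t ≤ 1; linarith [ht.1])
  rw [setIntegral_const, measureReal_def] at h
  simpa [sub_neg_eq_add, add_comm] using h

lemma US_one (m : ℕ) : ∫ _ in Sset (Fin m), (1:ℝ) = 1/(m+1) := by
  rw [sliceInt _ measurable_const (fun p _ => by norm_num)]
  rw [setIntegral_congr_fun measurableSet_Icc (g := fun t => (1+t)^m)
    (fun t ht => by rw [setIntegral_const, measureReal_def, box_toReal m t ht, smul_eq_mul, mul_one])]
  exact intD m

lemma US_fst (m : ℕ) : ∫ p in Sset (Fin m), p.1 = 1/(m+2) - 1/(m+1) := by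
  rw [sliceInt _ measurable_fst (fun p hp => by
    rw [Real.norm_eq_abs, abs_le]; exact ⟨hp.1.1, le_trans hp.1.2 zero_le_one⟩)]
  rw [setIntegral_congr_fun measurableSet_Icc (g := fun t => t*(1+t)^m)
    (fun t ht => by rw [setIntegral_const, measureReal_def, box_toReal m t ht, smul_eq_mul, mul_comm])]
  exact intE m

lemma US_snd (m : ℕ) (hm : 1 ≤ m) (k : Fin m) :
    ∫ p in Sset (Fin m), p.2 k = 1/(m+1) - 1/(2*(m+2)) := by
  rw [sliceInt _ measurable_snd.eval (fun p hp => by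
    rw [Real.norm_eq_abs, abs_le]
    have h1 := (hp.2 k).1; have h2 := (hp.2 k).2; have h3 := hp.1.2
    constructor <;> linarith)]
  rw [setIntegral_congr_fun measurableSet_Icc
    (g := fun t => (1+t)^m/2 - t*(1+t)^m/2) (fun t ht => ?_)]
  · rw [integral_sub, integral_div, integral_div, intD m, intE m]
    · push_cast; field_simp; ring
    · exact ((continuous_const.add continuous_id).pow m).div_const 2 |>.integrableOn_Icc
    · exact ((continuous_id.mul ((continuous_const.add continuous_id).pow m)).div_const
        2).integrableOn_Icc
  · have hb := box_eval (fun _ : Fin m => -t) (fun _ => 1) (fun _ => by show -t ≤ 1; linarith [ht.1]) k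
    rw [hb, Finset.prod_const, Finset.card_erase_of_mem (Finset.mem_univ k),
      Finset.card_univ, Fintype.card_fin]
    have hpow : (1 - -t)^(m-1) * (1+t) = (1+t)^m := by
      rw [sub_neg_eq_add, add_comm, ← pow_succ, Nat.sub_add_cancel hm]
    linear_combination ((1-t)/2) * hpow

def pC0 (d : ℕ) : Set (Fin d → ℝ) := {x | ∀ i, x i ∈ Icc (0:ℝ) 1}

def pU (d : ℕ) (j : Fin d) : Set (Fin d → ℝ) :=
  {x | -1 ≤ x j ∧ x j ≤ 0 ∧ ∀ k, k ≠ j → |x j| ≤ x k ∧ x k ≤ 1}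

lemma pU_preimage (m : ℕ) (j : Fin (m+1)) :
    pU (m+1) j = (MeasurableEquiv.piFinSuccAbove (fun _ => ℝ) j) ⁻¹' Sset (Fin m) := by
  ext x
  show _ ↔ (x j, fun k => x (j.succAbove k)) ∈ Sset (Fin m)
  constructor
  · rintro ⟨h1, h2, h3⟩
    refine ⟨⟨h1, h2⟩, fun k => ?_⟩
    have h := h3 _ (Fin.succAbove_ne j k)
    rw [abs_of_nonpos h2] at h
    exact ⟨h.1, h.2⟩
  · rintro ⟨⟨h1, h2⟩, h3⟩
    refine ⟨h1, h2, fun k hk => ?_⟩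
    obtain ⟨k', rfl⟩ := Fin.exists_succAbove_eq hk
    rw [abs_of_nonpos h2]
    exact ⟨(h3 k').1, (h3 k').2⟩

lemma pU_int (m : ℕ) (j : Fin (m+1)) (g : ℝ × (Fin m → ℝ) → ℝ) :
    ∫ x in pU (m+1) j, g (x j, fun k => x (j.succAbove k)) = ∫ p in Sset (Fin m), g p := by
  rw [pU_preimage]
  exact (volume_preserving_piFinSuccAbove (fun _ => ℝ) j).setIntegral_preimage_emb
    (MeasurableEquiv.measurableEmbedding _) g _

lemma pU_vol (m : ℕ) (j : Fin (m+1)) : ∫ _ in pU (m+1) j, (1:ℝ) = 1/(m+1) := by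
  rw [← US_one m, ← pU_int m j (fun _ => (1:ℝ))]

lemma pU_self (m : ℕ) (j : Fin (m+1)) : ∫ x in pU (m+1) j, x j = 1/(m+2) - 1/(m+1) := by
  rw [← US_fst m, ← pU_int m j (fun p => p.1)]

lemma pU_other (m : ℕ) (hm : 1 ≤ m) (j i : Fin (m+1)) (hij : i ≠ j) :
    ∫ x in pU (m+1) j, x i = 1/(m+1) - 1/(2*(m+2)) := by
  obtain ⟨k, rfl⟩ := Fin.exists_succAbove_eq hij
  rw [← US_snd m hm k, ← pU_int m j (fun p => p.2 k)]

lemma pC0_eq (d : ℕ) : pC0 d = Set.pi Set.univ (fun _ : Fin d => Icc (0:ℝ) 1) := by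
  ext x; simp only [pC0, Set.mem_setOf_eq, Set.mem_univ_pi, Set.mem_Icc]

lemma pC0_one (d : ℕ) : ∫ _ in pC0 d, (1:ℝ) = 1 := by
  rw [pC0_eq, box_one (fun _ => (0:ℝ)) (fun _ => (1:ℝ)) (fun _ => zero_le_one)]
  simp

lemma pC0_eval (d : ℕ) (i : Fin d) : ∫ x in pC0 d, x i = 1/2 := by
  rw [pC0_eq, box_eval (fun _ => (0:ℝ)) (fun _ => (1:ℝ)) (fun _ => zero_le_one) i]
  simp

lemma pC0_meas (d : ℕ) : MeasurableSet (pC0 d) := by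
  rw [pC0_eq]; exact MeasurableSet.univ_pi fun _ => measurableSet_Icc

lemma pU_meas (d : ℕ) (j : Fin d) : MeasurableSet (pU d j) := by
  have h1 : pU d j = ((fun x : Fin d → ℝ => x j) ⁻¹' Icc (-1:ℝ) 0) ∩
      ⋂ k ∈ {k : Fin d | k ≠ j}, ({x : Fin d → ℝ | |x j| ≤ x k} ∩ {x | x k ≤ 1}) := by
    ext x
    simp only [pU, Set.mem_inter_iff, Set.mem_preimage, Set.mem_Icc, Set.mem_iInter,
      Set.mem_setOf_eq, Set.mem_sep_iff]
    constructor
    · rintro ⟨h1, h2, h3⟩; exact ⟨⟨h1, h2⟩, fun k hk => h3 k hk⟩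
    · rintro ⟨⟨h1, h2⟩, h3⟩; exact ⟨h1, h2, fun k hk => h3 k hk⟩
  rw [h1]
  refine ((measurable_pi_apply j) measurableSet_Icc).inter
    (MeasurableSet.biInter (Set.to_countable _) fun k _ => MeasurableSet.inter ?_ ?_)
  · exact measurableSet_le (measurable_pi_apply j).abs (measurable_pi_apply k)
  · exact measurableSet_le (measurable_pi_apply k) measurable_const

lemma hyperplane_null (d : ℕ) (j : Fin d) : volume {x : Fin d → ℝ | x j = 0} = 0 :=
  Measure.pi_hyperplane (fun _ => volume) j 0

lemma pU_inter_null (d : ℕ) {j k : Fin d} (hjk : j ≠ k) :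
    volume (pU d j ∩ pU d k) = 0 := by
  refine measure_mono_null (fun x hx => ?_) (hyperplane_null d j)
  have h1 := hx.1.2.1
  have h2 := (hx.2.2.2 j hjk).1
  have h3 := abs_nonneg (x k)
  show x j = 0
  linarith

lemma bigV_subset (d : ℕ) :
    pC0 d ∪ ⋃ j, pU d j ⊆ Set.pi Set.univ (fun _ : Fin d => Icc (-1:ℝ) 1) := by
  rintro x (hx | hx)
  · exact fun i _ => ⟨le_trans (by norm_num) (hx i).1, (hx i).2⟩
  · obtain ⟨s, ⟨j, rfl⟩, hx⟩ := hx
    intro i _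
    by_cases hij : i = j
    · subst hij; exact ⟨hx.1, le_trans hx.2.1 zero_le_one⟩
    · have h := hx.2.2 i hij
      exact ⟨le_trans (by norm_num) (le_trans (abs_nonneg _) h.1), h.2⟩

lemma bigV_bound (d : ℕ) (i : Fin d) (x : Fin d → ℝ) (hx : x ∈ pC0 d ∪ ⋃ j, pU d j) :
    ‖x i‖ ≤ 1 := by
  have h := bigV_subset d hx i (Set.mem_univ i)
  rw [Real.norm_eq_abs, abs_le]; exact ⟨h.1, h.2⟩

lemma bigV_meas (d : ℕ) : MeasurableSet (pC0 d ∪ ⋃ j, pU d j) :=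
  (pC0_meas d).union (MeasurableSet.iUnion fun j => pU_meas d j)

lemma bigV_vol_ne_top (d : ℕ) : volume (pC0 d ∪ ⋃ j, pU d j) ≠ ⊤ := by
  refine ne_top_of_le_ne_top ?_ (measure_mono (bigV_subset d))
  rw [volume_pi_pi]
  exact ENNReal.prod_ne_top fun _ _ => by simp [Real.volume_Icc]

lemma bigV_integrableOn (d : ℕ) (i : Fin d) :
    IntegrableOn (fun x : Fin d → ℝ => x i) (pC0 d ∪ ⋃ j, pU d j) volume :=
  Measure.integrableOn_of_bounded (bigV_vol_ne_top d)
    (measurable_pi_apply i).aestronglyMeasurable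
    ((ae_restrict_iff' (bigV_meas d)).2 (Filter.Eventually.of_forall (bigV_bound d i)))

lemma bigV_integrableOn_one (d : ℕ) :
    IntegrableOn (fun _ : Fin d → ℝ => (1:ℝ)) (pC0 d ∪ ⋃ j, pU d j) volume :=
  integrableOn_const (bigV_vol_ne_top d)

lemma bigV_decomp (d : ℕ) (f : (Fin d → ℝ) → ℝ)
    (hf : IntegrableOn f (pC0 d ∪ ⋃ j, pU d j) volume) :
    ∫ x in pC0 d ∪ ⋃ j, pU d j, f x = (∫ x in pC0 d, f x) + ∑ j, ∫ x in pU d j, f x := by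
  have hC0U : AEDisjoint volume (pC0 d) (⋃ j, pU d j) := by
    show volume _ = 0
    rw [Set.inter_iUnion]
    refine measure_iUnion_null fun j => measure_mono_null (fun x hx => ?_)
      (hyperplane_null d j)
    exact le_antisymm hx.2.2.1 (hx.1 j).1
  have hUU : Pairwise (Function.onFun (AEDisjoint volume) fun j => pU d j) := fun j k hjk =>
    pU_inter_null d hjk
  rw [integral_union_ae hC0U
    (MeasurableSet.iUnion fun j => pU_meas d j).nullMeasurableSet
    (hf.mono_set Set.subset_union_left) (hf.mono_set Set.subset_union_right)]
  rw [integral_iUnion_ae (fun j => (pU_meas d j).nullMeasurableSet) hUU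
    (hf.mono_set Set.subset_union_right), tsum_fintype]

theorem stmt7 (d : ℕ) (hd : 2 ≤ d) :
    ∀ i : Fin d,
      (volume (C0 d ∪ ⋃ j, U d j)).toReal⁻¹ * ∫ x in C0 d ∪ ⋃ j, U d j, x i =
        1 / 2 - 1 / (d * (d + 1)) := by
  intro i
  obtain ⟨m, rfl⟩ : ∃ m, d = m + 1 := ⟨d - 1, by omega⟩
  have hm : 1 ≤ m := by omega
  have he := EuclideanSpace.volume_preserving_symm_measurableEquiv_toLp (Fin (m+1))
  have hset : C0 (m+1) ∪ ⋃ j, U (m+1) j =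
      ⇑(MeasurableEquiv.toLp 2 (Fin (m+1) → ℝ)).symm ⁻¹' (pC0 (m+1) ∪ ⋃ j, pU (m+1) j) := by
    rw [MeasurableEquiv.coe_toLp_symm]; ext x
    simp only [Set.mem_union, Set.mem_iUnion, Set.mem_preimage]; exact Iff.rfl
  have hvol : volume (C0 (m+1) ∪ ⋃ j, U (m+1) j)
      = volume (pC0 (m+1) ∪ ⋃ j, pU (m+1) j) := by
    rw [hset]; exact he.measure_preimage (bigV_meas (m+1)).nullMeasurableSet
  have hint : ∫ x in C0 (m+1) ∪ ⋃ j, U (m+1) j, x i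
      = ∫ y in pC0 (m+1) ∪ ⋃ j, pU (m+1) j, y i := by
    rw [hset]
    exact he.setIntegral_preimage_emb
      (MeasurableEquiv.measurableEmbedding _) (fun y => y i) _
  rw [hvol, hint]
  have h1 : (volume (pC0 (m+1) ∪ ⋃ j, pU (m+1) j)).toReal = 2 := by
    have hdec := bigV_decomp (m+1) (fun _ => (1:ℝ)) (bigV_integrableOn_one (m+1))
    rw [setIntegral_const, smul_eq_mul, mul_one, measureReal_def] at hdec
    rw [hdec, pC0_one]
    simp only [pU_vol]
    rw [Finset.sum_const, Finset.card_univ, Fintype.card_fin, nsmul_eq_mul]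
    push_cast
    have : (m:ℝ) + 1 ≠ 0 := by positivity
    field_simp
    norm_num
  have hterm : ∀ j : Fin (m+1), ∫ x in pU (m+1) j, x i
      = ((1:ℝ)/(m+1) - 1/(2*(m+2))) + if j = i then
        (((1:ℝ)/(m+2) - 1/(m+1)) - (1/(m+1) - 1/(2*(m+2)))) else (0:ℝ) := by
    intro j
    by_cases h : j = i
    · subst h; rw [pU_self, if_pos rfl]; ring
    · rw [pU_other m hm j i (Ne.symm h), if_neg h, add_zero]
  have h2 : ∫ y in pC0 (m+1) ∪ ⋃ j, pU (m+1) j, y i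
      = 1/2 + ((m+1) * (1/(m+1) - 1/(2*(m+2)))
        + ((1/(m+2) - 1/(m+1)) - (1/(m+1) - 1/(2*(m+2))))) := by
    rw [bigV_decomp (m+1) (fun y => y i) (bigV_integrableOn (m+1) i), pC0_eval]
    rw [Finset.sum_congr rfl fun j _ => hterm j, Finset.sum_add_distrib,
      Finset.sum_const, Finset.card_univ, Fintype.card_fin, nsmul_eq_mul,
      Finset.sum_ite_eq' Finset.univ i, if_pos (Finset.mem_univ i)]
    push_cast
    ring
  rw [h1, h2]
  have hm1 : (m:ℝ) + 1 ≠ 0 := by positivity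
  have hm2 : (m:ℝ) + 2 ≠ 0 := by positivity
  push_cast
  field_simp
  ring


end
end

section
/- Let d ≥ 2, 0 < δ ≤ 1 and r ≥ 0. Then C_d(D(d,δ), r) = (1/2)·vol(V ∩ B(δ·1, r)), where V = C_0 ∪ ⋃_{j=1}^d U_j and B(δ·1,r) is the closed Euclidean ball of radius r centred at δ·1. -/
open MeasureTheory Filter

noncomputable section

namespace Stmt8Aux

open scoped symmDiff
open Finset Metric

variable {d : ℕ} {δ' r' : ℝ}

/-! ### The sign-flip maps -/

def flipLI (S : Finset (Fin d)) : EuclideanSpace ℝ (Fin d) ≃ₗᵢ[ℝ] EuclideanSpace ℝ (Fin d) :=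
  LinearIsometryEquiv.piLpCongrRight 2
    (fun i => if i ∈ S then LinearIsometryEquiv.neg ℝ else LinearIsometryEquiv.refl ℝ ℝ)

def flip (S : Finset (Fin d)) (x : EuclideanSpace ℝ (Fin d)) : EuclideanSpace ℝ (Fin d) :=
  flipLI S x

lemma flip_apply (S : Finset (Fin d)) (x : EuclideanSpace ℝ (Fin d)) (i : Fin d) :
    flip S x i = if i ∈ S then -x i else x i := by
  show (LinearIsometryEquiv.piLpCongrRight 2 _) x i = _
  rw [LinearIsometryEquiv.piLpCongrRight_apply]
  by_cases h : i ∈ S <;> simp [h]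

lemma flip_flip (S : Finset (Fin d)) (x : EuclideanSpace ℝ (Fin d)) :
    flip S (flip S x) = x := by
  ext i
  rw [flip_apply, flip_apply]
  by_cases h : i ∈ S <;> simp [h]

lemma flip_comp (S T : Finset (Fin d)) (x : EuclideanSpace ℝ (Fin d)) :
    flip S (flip T x) = flip (S ∆ T) x := by
  ext i
  rw [flip_apply, flip_apply, flip_apply]
  by_cases h : i ∈ S <;> by_cases h' : i ∈ T <;>
    simp [h, h', Finset.mem_symmDiff]

lemma dist_flip (S : Finset (Fin d)) (x y : EuclideanSpace ℝ (Fin d)) :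
    dist (flip S x) (flip S y) = dist x y := (flipLI S).dist_map x y

lemma measurePreserving_flip (S : Finset (Fin d)) :
    MeasurePreserving (flip S) (volume : Measure (EuclideanSpace ℝ (Fin d))) volume :=
  (flipLI S).measurePreserving

lemma abs_flip_apply (S : Finset (Fin d)) (x : EuclideanSpace ℝ (Fin d)) (i : Fin d) :
    |flip S x i| = |x i| := by
  rw [flip_apply]; by_cases h : i ∈ S <;> simp [h]

/-! ### Even subsets -/

def evens (d : ℕ) : Finset (Finset (Fin d)) :=
  Finset.univ.filter (fun S => Even S.card)

lemma mem_evens {S : Finset (Fin d)} : S ∈ evens d ↔ Even S.card := by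
  simp [evens]

lemma empty_mem_evens : (∅ : Finset (Fin d)) ∈ evens d := by
  simp [evens]

lemma symmDiff_mem_evens {S T : Finset (Fin d)} (hS : S ∈ evens d) (hT : T ∈ evens d) :
    S ∆ T ∈ evens d := by
  classical
  rw [mem_evens] at *
  have h1 : S ∆ T = (S ∪ T) \ (S ∩ T) := by
    ext i; simp [Finset.mem_symmDiff]; tauto
  have hsub : S ∩ T ⊆ S ∪ T := (Finset.inter_subset_left).trans Finset.subset_union_left
  have h2 : ((S ∪ T) \ (S ∩ T)).card + (S ∩ T).card = (S ∪ T).card :=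
    Finset.card_sdiff_add_card_eq_card hsub
  rw [← h1] at h2
  have h3 : (S ∪ T).card + (S ∩ T).card = S.card + T.card :=
    Finset.card_union_add_card_inter S T
  rw [Nat.even_iff] at *
  omega

lemma symmDiff_singleton_of_mem {S : Finset (Fin d)} {i : Fin d} (h : i ∈ S) :
    S ∆ {i} = S.erase i := by
  ext j
  by_cases hj : j = i
  · subst hj; simp [Finset.mem_symmDiff, h]
  · simp [Finset.mem_symmDiff, Finset.mem_erase, hj]

lemma symmDiff_singleton_of_not_mem {S : Finset (Fin d)} {i : Fin d} (h : i ∉ S) :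
    S ∆ {i} = insert i S := by
  ext j
  by_cases hj : j = i
  · subst hj; simp [Finset.mem_symmDiff, h]
  · simp [Finset.mem_symmDiff, Finset.mem_insert, hj]

lemma even_symmDiff_singleton_iff {S : Finset (Fin d)} {i : Fin d} :
    Even (S ∆ {i}).card ↔ ¬ Even S.card := by
  by_cases h : i ∈ S
  · rw [symmDiff_singleton_of_mem h, Finset.card_erase_of_mem h]
    have : 1 ≤ S.card := Finset.card_pos.mpr ⟨i, h⟩
    rw [Nat.even_iff, Nat.even_iff]; omega
  · rw [symmDiff_singleton_of_not_mem h, Finset.card_insert_of_notMem h]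
    rw [Nat.even_iff, Nat.even_iff]; omega

lemma card_evens (hd : 1 ≤ d) : (evens d).card = 2 ^ (d - 1) := by
  classical
  have i0 : Fin d := ⟨0, by omega⟩
  set odds : Finset (Finset (Fin d)) := Finset.univ.filter (fun S => ¬ Even S.card) with hodds
  have hcard : (evens d).card + odds.card = 2 ^ d := by
    rw [evens, hodds, Finset.card_filter_add_card_filter_not]
    simp [Finset.card_univ]
  have hbij : (evens d).card = odds.card := by
    refine Finset.card_bij' (fun S _ => S ∆ {i0}) (fun S _ => S ∆ {i0}) ?_ ?_ ?_ ?_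
    · intro S hS
      rw [mem_evens] at hS
      rw [hodds, Finset.mem_filter]
      exact ⟨Finset.mem_univ _, by simpa [even_symmDiff_singleton_iff] using hS⟩
    · intro S hS
      rw [hodds, Finset.mem_filter] at hS
      rw [mem_evens]
      simpa [even_symmDiff_singleton_iff] using hS.2
    · intro S _
      show S ∆ {i0} ∆ {i0} = S
      exact symmDiff_symmDiff_cancel_right {i0} S
    · intro S _
      show S ∆ {i0} ∆ {i0} = S
      exact symmDiff_symmDiff_cancel_right {i0} S
  have : 2 ^ d = 2 * 2 ^ (d - 1) := by
    rw [← pow_succ']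
    congr 1
    omega
  omega

/-! ### The design as flips of the constant vector -/

lemma design_eq (δ : ℝ) :
    design d δ = (fun S => flip S (const d δ)) '' ↑(evens d) := by
  classical
  ext z
  constructor
  · rintro ⟨ε, hε, heven, hz⟩
    refine ⟨{i | ε i = -1}.toFinset, ?_, ?_⟩
    · rw [Finset.mem_coe, mem_evens]
      rwa [Set.ncard_eq_toFinset_card'] at heven
    · ext i
      rw [hz]
      show flip {i | ε i = -1}.toFinset (const d δ) i = δ * ε i
      rw [flip_apply]
      by_cases h : ε i = -1
      · rw [if_pos (by simpa using h), h]
        show -const d δ i = δ * (-1)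
        show -δ = δ * (-1)
        ring
      · have h1 : ε i = 1 := (hε i).resolve_right h
        rw [if_neg (by simpa using h), h1]
        show const d δ i = δ * 1
        show δ = δ * 1
        ring
  · rintro ⟨S, hS, rfl⟩
    rw [Finset.mem_coe, mem_evens] at hS
    refine ⟨fun i => if i ∈ S then (-1 : ℝ) else 1, fun i => ?_, ?_, ?_⟩
    · by_cases h : i ∈ S
      · right; simp [h]
      · left; simp [h]
    · have : {i | (if i ∈ S then (-1 : ℝ) else 1) = -1} = ↑S := by
        ext i
        by_cases h : i ∈ S
        · simp [h]
        · simp [h]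
          norm_num
      rw [this, Set.ncard_coe_finset]
      exact hS
    · funext i
      show flip S (const d δ) i = δ * (if i ∈ S then (-1:ℝ) else 1)
      rw [flip_apply]
      by_cases h : i ∈ S <;> simp [h, const] <;> ring

/-! ### Basic sets -/

def Vset (d : ℕ) : Set (EuclideanSpace ℝ (Fin d)) := C0 d ∪ ⋃ j, U d j

lemma mem_cube_iff {x : EuclideanSpace ℝ (Fin d)} : x ∈ cube d ↔ ∀ i, |x i| ≤ 1 := by
  simp [cube, Set.mem_Icc, abs_le]

lemma Vset_subset_cube : Vset d ⊆ cube d := by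
  rintro x (hx | hx)
  · intro i
    have := hx i
    constructor
    · linarith [this.1]
    · exact this.2
  · rw [Set.mem_iUnion] at hx
    obtain ⟨j, hj⟩ := hx
    intro i
    by_cases h : i = j
    · subst h; exact ⟨hj.1, le_trans hj.2.1 zero_le_one⟩
    · have := hj.2.2 i h
      refine ⟨le_trans (by norm_num) (le_trans (abs_nonneg _) this.1), this.2⟩

lemma flip_mem_cube_iff {S : Finset (Fin d)} {x : EuclideanSpace ℝ (Fin d)} :
    flip S x ∈ cube d ↔ x ∈ cube d := by
  rw [mem_cube_iff, mem_cube_iff]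
  exact forall_congr' fun i => by rw [abs_flip_apply]

/-! ### Measurability -/

lemma continuous_coord (i : Fin d) : Continuous fun x : EuclideanSpace ℝ (Fin d) => x i :=
  (continuous_apply i).comp (PiLp.continuous_ofLp 2 _)

lemma measurableSet_cube : MeasurableSet (cube d) := by
  have : cube d = ⋂ i, (fun x : EuclideanSpace ℝ (Fin d) => x i) ⁻¹' Set.Icc (-1) 1 := by
    ext x; simp [cube]
  rw [this]
  exact MeasurableSet.iInter fun i =>
    (continuous_coord i).measurable measurableSet_Icc

lemma measurableSet_C0 : MeasurableSet (C0 d) := by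
  have : C0 d = ⋂ i, (fun x : EuclideanSpace ℝ (Fin d) => x i) ⁻¹' Set.Icc 0 1 := by
    ext x; simp [C0]
  rw [this]
  exact MeasurableSet.iInter fun i =>
    (continuous_coord i).measurable measurableSet_Icc

lemma measurableSet_U (j : Fin d) : MeasurableSet (U d j) := by
  have hU : U d j = ({x : EuclideanSpace ℝ (Fin d) | -1 ≤ x j} ∩
      {x : EuclideanSpace ℝ (Fin d) | x j ≤ 0}) ∩
      ⋂ k, {x : EuclideanSpace ℝ (Fin d) | k ≠ j → (|x j| ≤ x k ∧ x k ≤ 1)} := by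
    ext x
    simp only [U, Set.mem_setOf_eq, Set.mem_inter_iff, Set.mem_iInter]
    tauto
  rw [hU]
  refine MeasurableSet.inter (MeasurableSet.inter ?_ ?_) (MeasurableSet.iInter fun k => ?_)
  · exact measurableSet_le measurable_const (continuous_coord j).measurable
  · exact measurableSet_le (continuous_coord j).measurable measurable_const
  · by_cases hk : k = j
    · subst hk
      have : {x : EuclideanSpace ℝ (Fin d) | k ≠ k → (|x k| ≤ x k ∧ x k ≤ 1)} = Set.univ := by
        ext x; simp
      rw [this]; exact MeasurableSet.univ
    · have : {x : EuclideanSpace ℝ (Fin d) | k ≠ j → (|x j| ≤ x k ∧ x k ≤ 1)} =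
          {x : EuclideanSpace ℝ (Fin d) | |x j| ≤ x k} ∩
          {x : EuclideanSpace ℝ (Fin d) | x k ≤ 1} := by
        ext x; simp [hk]
      rw [this]
      exact MeasurableSet.inter
        (measurableSet_le (continuous_coord j).abs.measurable (continuous_coord k).measurable)
        (measurableSet_le (continuous_coord k).measurable measurable_const)

lemma measurableSet_Vset : MeasurableSet (Vset d) :=
  measurableSet_C0.union (MeasurableSet.iUnion fun j => measurableSet_U j)

/-! ### The bad (null) set -/

def Zbad (d : ℕ) : Set (EuclideanSpace ℝ (Fin d)) :=
  {x | ∃ i, x i = 0} ∪ {x | ∃ i k, i ≠ k ∧ |x i| = |x k|}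

def coordL (i : Fin d) : EuclideanSpace ℝ (Fin d) →ₗ[ℝ] ℝ :=
  (LinearMap.proj i).comp (WithLp.linearEquiv 2 ℝ (Fin d → ℝ)).toLinearMap

lemma coordL_apply (i : Fin d) (x : EuclideanSpace ℝ (Fin d)) : coordL i x = x i := rfl

lemma volume_ker_eq_zero (f : EuclideanSpace ℝ (Fin d) →ₗ[ℝ] ℝ)
    (hf : f ≠ 0) : volume {x : EuclideanSpace ℝ (Fin d) | f x = 0} = 0 := by
  have h : {x : EuclideanSpace ℝ (Fin d) | f x = 0} = (LinearMap.ker f : Set _) := by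
    ext x; simp [LinearMap.mem_ker]
  rw [h]
  refine Measure.addHaar_submodule volume _ ?_
  intro h'
  rw [LinearMap.ker_eq_top] at h'
  exact hf h'

lemma volume_Zbad : volume (Zbad d) = 0 := by
  classical
  refine measure_union_null ?_ ?_
  · have h : {x : EuclideanSpace ℝ (Fin d) | ∃ i, x i = 0} =
        ⋃ i, {x : EuclideanSpace ℝ (Fin d) | x i = 0} := by
      ext x; simp
    rw [h]
    refine measure_iUnion_null fun i => ?_
    have : {x : EuclideanSpace ℝ (Fin d) | x i = 0} =
        {x : EuclideanSpace ℝ (Fin d) | coordL i x = 0} := by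
      ext x; simp only [Set.mem_setOf_eq, coordL_apply]
    rw [this]
    refine volume_ker_eq_zero _ ?_
    intro h'
    have := congrArg (fun g => g (EuclideanSpace.single i (1 : ℝ))) h'
    simp only [coordL_apply, LinearMap.zero_apply] at this
    rw [EuclideanSpace.single_apply] at this
    simp at this
  · have h : {x : EuclideanSpace ℝ (Fin d) | ∃ i k, i ≠ k ∧ |x i| = |x k|} =
        ⋃ i, ⋃ k, {x : EuclideanSpace ℝ (Fin d) | i ≠ k ∧ |x i| = |x k|} := by
      ext x; simp
    rw [h]
    refine measure_iUnion_null fun i => measure_iUnion_null fun k => ?_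
    by_cases hik : i = k
    · subst hik
      have : {x : EuclideanSpace ℝ (Fin d) | i ≠ i ∧ |x i| = |x i|} = ∅ := by
        ext x; simp
      simp [this]
    · have hsub : {x : EuclideanSpace ℝ (Fin d) | i ≠ k ∧ |x i| = |x k|} ⊆
          {x : EuclideanSpace ℝ (Fin d) | (coordL i - coordL k) x = 0} ∪
          {x : EuclideanSpace ℝ (Fin d) | (coordL i + coordL k) x = 0} := by
        intro x hx
        rcases abs_eq_abs.mp hx.2 with h | h
        · left
          simp [coordL_apply, sub_eq_zero, h]
        · right
          simp [coordL_apply, h]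
      refine measure_mono_null hsub (measure_union_null ?_ ?_)
      · refine volume_ker_eq_zero _ ?_
        intro h'
        have := congrArg (fun g => g (EuclideanSpace.single i (1 : ℝ))) h'
        simp only [LinearMap.sub_apply, coordL_apply, LinearMap.zero_apply] at this
        rw [EuclideanSpace.single_apply, EuclideanSpace.single_apply] at this
        simp [hik, Ne.symm hik] at this
      · refine volume_ker_eq_zero _ ?_
        intro h'
        have := congrArg (fun g => g (EuclideanSpace.single i (1 : ℝ))) h'
        simp only [LinearMap.add_apply, coordL_apply, LinearMap.zero_apply] at this
        rw [EuclideanSpace.single_apply, EuclideanSpace.single_apply] at this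
        simp [hik, Ne.symm hik] at this

/-! ### Covering the cube by flipped copies of V -/

open Classical in
def Nx (x : EuclideanSpace ℝ (Fin d)) : Finset (Fin d) :=
  Finset.univ.filter (fun i => x i < 0)

open Classical in
lemma mem_Nx {x : EuclideanSpace ℝ (Fin d)} {i : Fin d} : i ∈ Nx x ↔ x i < 0 := by
  simp [Nx]

lemma exists_flip_mem_V (hd : 1 ≤ d) (x : EuclideanSpace ℝ (Fin d)) (hx : x ∈ cube d) :
    ∃ S ∈ evens d, flip S x ∈ Vset d := by
  classical
  have habs : ∀ i, |x i| ≤ 1 := mem_cube_iff.mp hx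
  by_cases hN : Even (Nx x).card
  · refine ⟨Nx x, mem_evens.mpr hN, Or.inl fun i => ?_⟩
    rw [flip_apply]
    by_cases h : i ∈ Nx x
    · rw [if_pos h]
      have hxi := mem_Nx.mp h
      constructor
      · linarith
      · have := (habs i)
        rw [abs_of_neg hxi] at this
        linarith
    · rw [if_neg h]
      have hxi : ¬ x i < 0 := fun hc => h (mem_Nx.mpr hc)
      exact ⟨le_of_not_gt hxi, (abs_le.mp (habs i)).2⟩
  · have : Nonempty (Fin d) := ⟨⟨0, by omega⟩⟩
    obtain ⟨j, -, hj⟩ := Finset.exists_min_image Finset.univ (fun i => |x i|)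
      Finset.univ_nonempty
    set S : Finset (Fin d) := if j ∈ Nx x then (Nx x).erase j else insert j (Nx x) with hS
    have hScard : Even S.card := by
      rw [hS]
      by_cases h : j ∈ Nx x
      · rw [if_pos h, Finset.card_erase_of_mem h]
        have : 1 ≤ (Nx x).card := Finset.card_pos.mpr ⟨j, h⟩
        rw [Nat.even_iff] at *
        omega
      · rw [if_neg h, Finset.card_insert_of_notMem h]
        rw [Nat.even_iff] at *
        omega
    have hjS : j ∈ S ↔ j ∉ Nx x := by
      rw [hS]
      by_cases h : j ∈ Nx x <;> simp [h]
    have hkS : ∀ k, k ≠ j → (k ∈ S ↔ k ∈ Nx x) := by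
      intro k hk
      rw [hS]
      by_cases h : j ∈ Nx x <;> simp [h, Finset.mem_erase, Finset.mem_insert, hk]
    have hyj : flip S x j = -|x j| := by
      rw [flip_apply]
      by_cases h : j ∈ S
      · rw [if_pos h]
        have : ¬ x j < 0 := fun hc => (hjS.mp h) (mem_Nx.mpr hc)
        rw [abs_of_nonneg (le_of_not_gt this)]
      · rw [if_neg h]
        have : x j < 0 := mem_Nx.mp (by_contra fun hc => h (hjS.mpr hc))
        rw [abs_of_neg this]; ring
    have hyk : ∀ k, k ≠ j → flip S x k = |x k| := by
      intro k hk
      rw [flip_apply]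
      by_cases h : k ∈ S
      · rw [if_pos h]
        have : x k < 0 := mem_Nx.mp ((hkS k hk).mp h)
        rw [abs_of_neg this]
      · rw [if_neg h]
        have : ¬ x k < 0 := fun hc => h ((hkS k hk).mpr (mem_Nx.mpr hc))
        rw [abs_of_nonneg (le_of_not_gt this)]
    refine ⟨S, mem_evens.mpr hScard, Or.inr ?_⟩
    rw [Set.mem_iUnion]
    refine ⟨j, ?_, ?_, ?_⟩
    · rw [hyj]
      have := habs j
      linarith [abs_nonneg (x j)]
    · rw [hyj]
      linarith [abs_nonneg (x j)]
    · intro k hk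
      rw [hyk k hk, hyj]
      constructor
      · rw [abs_neg, abs_abs]
        exact hj k (Finset.mem_univ k)
      · exact habs k

/-! ### Uniqueness of the flip -/

lemma flip_mem_V_classify {x : EuclideanSpace ℝ (Fin d)}
    (h0 : ∀ i, x i ≠ 0) {S : Finset (Fin d)} (hV : flip S x ∈ Vset d) :
    S = Nx x ∨ ∃ j, (∀ k, k ≠ j → |x j| ≤ |x k|) ∧
      S = (if x j < 0 then (Nx x).erase j else insert j (Nx x)) := by
  classical
  rcases hV with hC0 | hU
  · left
    ext i
    rw [mem_Nx]
    have h1 := hC0 i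
    have h2 : flip S x i ≠ 0 := by
      rw [flip_apply]
      by_cases h : i ∈ S <;> simp [h, h0 i]
    have h3 : 0 < flip S x i := lt_of_le_of_ne h1.1 (Ne.symm h2)
    rw [flip_apply] at h3
    by_cases h : i ∈ S
    · rw [if_pos h] at h3
      simp only [h, true_iff]
      linarith
    · rw [if_neg h] at h3
      simp only [h, false_iff]
      linarith
  · right
    rw [Set.mem_iUnion] at hU
    obtain ⟨j, hj⟩ := hU
    have hyj : flip S x j < 0 := by
      refine lt_of_le_of_ne hj.2.1 ?_
      rw [flip_apply]
      by_cases h : j ∈ S <;> simp [h, h0 j]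
    have hyk : ∀ k, k ≠ j → 0 < flip S x k := by
      intro k hk
      have := (hj.2.2 k hk).1
      have h2 : (0:ℝ) ≤ |flip S x j| := abs_nonneg _
      have h3 : flip S x k ≠ 0 := by
        rw [flip_apply]
        by_cases h : k ∈ S <;> simp [h, h0 k]
      exact lt_of_le_of_ne (le_trans h2 this) (Ne.symm h3)
    refine ⟨j, ?_, ?_⟩
    · intro k hk
      have h1 := (hj.2.2 k hk).1
      have h2 : |flip S x j| = |x j| := abs_flip_apply S x j
      have h3 : flip S x k = |x k| := by
        have := hyk k hk
        have h4 := abs_flip_apply S x k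
        rcases abs_cases (flip S x k) with ⟨h5, -⟩ | ⟨h5, h6⟩
        · rw [← h5, h4]
        · linarith
      rw [h2, h3] at h1
      exact h1
    · have hjmem : j ∈ S ↔ ¬ x j < 0 := by
        rw [flip_apply] at hyj
        by_cases h : j ∈ S
        · rw [if_pos h] at hyj
          simp only [h, true_iff]
          linarith
        · rw [if_neg h] at hyj
          simp only [h, false_iff, not_not]
          linarith
      have hkmem : ∀ k, k ≠ j → (k ∈ S ↔ x k < 0) := by
        intro k hk
        have := hyk k hk
        rw [flip_apply] at this
        by_cases h : k ∈ S
        · rw [if_pos h] at this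
          simp only [h, true_iff]
          linarith
        · rw [if_neg h] at this
          simp only [h, false_iff]
          linarith
      ext i
      by_cases hij : i = j
      · subst hij
        by_cases h : x i < 0
        · rw [if_pos h]
          simp only [Finset.mem_erase, ne_eq, not_true_eq_false, false_and, iff_false]
          intro hc
          exact (hjmem.mp hc) h
        · rw [if_neg h]
          simp only [Finset.mem_insert, true_or, iff_true]
          exact hjmem.mpr h
      · by_cases h : x j < 0
        · rw [if_pos h, Finset.mem_erase]
          rw [hkmem i hij, mem_Nx]
          simp [hij]
        · rw [if_neg h, Finset.mem_insert]
          rw [hkmem i hij, mem_Nx]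
          simp [hij]

lemma flip_eq_of_mem_V {x : EuclideanSpace ℝ (Fin d)}
    (h0 : ∀ i, x i ≠ 0) (hdist : ∀ i k, i ≠ k → |x i| ≠ |x k|)
    {S T : Finset (Fin d)} (hS : S ∈ evens d) (hT : T ∈ evens d)
    (hVS : flip S x ∈ Vset d) (hVT : flip T x ∈ Vset d) : S = T := by
  classical
  have hSe := mem_evens.mp hS
  have hTe := mem_evens.mp hT
  have key : ∀ (W : Finset (Fin d)), Even W.card → flip W x ∈ Vset d →
      (Even (Nx x).card ∧ W = Nx x) ∨
      (¬ Even (Nx x).card ∧ ∃ j, (∀ k, k ≠ j → |x j| < |x k|) ∧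
        W = (if x j < 0 then (Nx x).erase j else insert j (Nx x))) := by
    intro W hWe hWV
    rcases flip_mem_V_classify h0 hWV with h | ⟨j, hjmin, hWeq⟩
    · exact Or.inl ⟨h ▸ hWe, h⟩
    · right
      have hcard : ¬ Even (Nx x).card := by
        by_cases h : x j < 0
        · rw [if_pos h] at hWeq
          have hjN : j ∈ Nx x := mem_Nx.mpr h
          have : W.card = (Nx x).card - 1 := by rw [hWeq, Finset.card_erase_of_mem hjN]
          have h1 : 1 ≤ (Nx x).card := Finset.card_pos.mpr ⟨j, hjN⟩
          rw [Nat.even_iff] at *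
          omega
        · rw [if_neg h] at hWeq
          have hjN : j ∉ Nx x := fun hc => h (mem_Nx.mp hc)
          have : W.card = (Nx x).card + 1 := by rw [hWeq, Finset.card_insert_of_notMem hjN]
          rw [Nat.even_iff] at *
          omega
      refine ⟨hcard, j, ?_, hWeq⟩
      intro k hk
      exact lt_of_le_of_ne (hjmin k hk) (hdist j k (Ne.symm hk))
  rcases key S hSe hVS with ⟨hNe, hSeq⟩ | ⟨hNo, j, hjmin, hSeq⟩ <;>
    rcases key T hTe hVT with ⟨hNe', hTeq⟩ | ⟨hNo', j', hjmin', hTeq⟩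
  · rw [hSeq, hTeq]
  · exact absurd hNe hNo'
  · exact absurd hNe' hNo
  · have hjj : j = j' := by
      by_contra hc
      have h1 := hjmin j' (Ne.symm hc)
      have h2 := hjmin' j hc
      linarith
    rw [hSeq, hTeq, hjj]

/-! ### Nearest design point -/

lemma sum_nonneg_of_mem_V {x : EuclideanSpace ℝ (Fin d)} (hx : x ∈ Vset d)
    {S : Finset (Fin d)} (hS : S ∈ evens d) : 0 ≤ ∑ i ∈ S, x i := by
  classical
  rcases hx with hC0 | hU
  · exact Finset.sum_nonneg fun i _ => (hC0 i).1
  · rw [Set.mem_iUnion] at hU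
    obtain ⟨j, hj⟩ := hU
    by_cases h : j ∈ S
    · have hcard : 2 ≤ S.card := by
        have h1 : 1 ≤ S.card := Finset.card_pos.mpr ⟨j, h⟩
        have := mem_evens.mp hS
        rw [Nat.even_iff] at this
        omega
      have hne : (S.erase j).Nonempty := by
        rw [← Finset.card_pos, Finset.card_erase_of_mem h]
        omega
      obtain ⟨k, hk⟩ := hne
      have hkj : k ≠ j := Finset.ne_of_mem_erase hk
      have h1 : ∑ i ∈ S, x i = x j + ∑ i ∈ S.erase j, x i :=
        (Finset.add_sum_erase S x h).symm
      have h2 : ∑ i ∈ S.erase j, x i = x k + ∑ i ∈ (S.erase j).erase k, x i :=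
        (Finset.add_sum_erase _ x hk).symm
      have h3 : 0 ≤ ∑ i ∈ (S.erase j).erase k, x i := by
        refine Finset.sum_nonneg fun i hi => ?_
        have hij : i ≠ j := Finset.ne_of_mem_erase (Finset.mem_of_mem_erase hi)
        have := (hj.2.2 i hij).1
        linarith [abs_nonneg (x j)]
      have h4 : |x j| ≤ x k := (hj.2.2 k hkj).1
      rw [h1, h2]
      have := neg_abs_le (x j)
      linarith
    · refine Finset.sum_nonneg fun i hi => ?_
      have hij : i ≠ j := fun hc => h (hc ▸ hi)
      have := (hj.2.2 i hij).1
      linarith [abs_nonneg (x j)]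

lemma dist_sq_eq (x y : EuclideanSpace ℝ (Fin d)) :
    dist x y = Real.sqrt (∑ i, (x i - y i) ^ 2) := by
  rw [EuclideanSpace.dist_eq]
  congr 1
  refine Finset.sum_congr rfl fun i _ => ?_
  rw [Real.dist_eq, sq_abs]

lemma dist_const_le (hδ : 0 < δ') {x : EuclideanSpace ℝ (Fin d)} (hx : x ∈ Vset d)
    {S : Finset (Fin d)} (hS : S ∈ evens d) :
    dist x (const d δ') ≤ dist x (flip S (const d δ')) := by
  rw [dist_sq_eq, dist_sq_eq]
  apply Real.sqrt_le_sqrt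
  have hc : ∀ i, const d δ' i = δ' := fun _ => rfl
  have hfc : ∀ i, flip S (const d δ') i = if i ∈ S then -δ' else δ' := by
    intro i
    rw [flip_apply]
    by_cases h : i ∈ S <;> simp [h, hc]
  have hsplit : ∀ (g : Fin d → ℝ),
      ∑ i, g i = ∑ i ∈ Finset.univ \ S, g i + ∑ i ∈ S, g i := fun g =>
    (Finset.sum_sdiff (Finset.subset_univ S)).symm
  rw [hsplit (fun i => (x i - const d δ' i) ^ 2),
    hsplit (fun i => (x i - flip S (const d δ') i) ^ 2)]
  have heq : ∑ i ∈ Finset.univ \ S, (x i - const d δ' i) ^ 2 =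
      ∑ i ∈ Finset.univ \ S, (x i - flip S (const d δ') i) ^ 2 := by
    refine Finset.sum_congr rfl fun i hi => ?_
    have : i ∉ S := (Finset.mem_sdiff.mp hi).2
    rw [hfc, if_neg this, hc]
  rw [heq]
  refine add_le_add le_rfl ?_
  have hdiff : ∑ i ∈ S, (x i - flip S (const d δ') i) ^ 2 -
      ∑ i ∈ S, (x i - const d δ' i) ^ 2 = 4 * δ' * ∑ i ∈ S, x i := by
    rw [← Finset.sum_sub_distrib, Finset.mul_sum]
    refine Finset.sum_congr rfl fun i hi => ?_
    rw [hfc, if_pos hi, hc]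
    ring
  have hsum := sum_nonneg_of_mem_V hx hS
  nlinarith [hsum, hδ.le]

lemma V_inter_balls (hδ : 0 < δ') (hr : 0 ≤ r') :
    Vset d ∩ (⋃ S ∈ evens d, closedBall (flip S (const d δ')) r') =
      Vset d ∩ closedBall (const d δ') r' := by
  ext x
  simp only [Set.mem_inter_iff, Set.mem_iUnion, Metric.mem_closedBall, exists_prop]
  constructor
  · rintro ⟨hxV, S, hS, hdist⟩
    exact ⟨hxV, le_trans (dist_const_le hδ hxV hS) hdist⟩
  · rintro ⟨hxV, hdist⟩
    refine ⟨hxV, ∅, empty_mem_evens, ?_⟩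
    have : flip (∅ : Finset (Fin d)) (const d δ') = const d δ' := by
      ext i
      rw [flip_apply]
      simp
    rw [this]
    exact hdist

/-! ### Invariance of the covered region -/

lemma flip_mem_balls_iff {δ' r' : ℝ} {S : Finset (Fin d)} (hS : S ∈ evens d)
    (x : EuclideanSpace ℝ (Fin d)) :
    flip S x ∈ (⋃ T ∈ evens d, closedBall (flip T (const d δ')) r') ↔
      x ∈ (⋃ T ∈ evens d, closedBall (flip T (const d δ')) r') := by
  have key : ∀ T, dist (flip S x) (flip T (const d δ')) =
      dist x (flip (S ∆ T) (const d δ')) := by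
    intro T
    conv_lhs => rw [show flip T (const d δ') = flip S (flip S (flip T (const d δ'))) from
      (flip_flip _ _).symm]
    rw [dist_flip, flip_comp]
  simp only [Set.mem_iUnion, Metric.mem_closedBall, exists_prop]
  constructor
  · rintro ⟨T, hT, hdist⟩
    exact ⟨S ∆ T, symmDiff_mem_evens hS hT, by rwa [key T] at hdist⟩
  · rintro ⟨T', hT', hdist⟩
    refine ⟨S ∆ T', symmDiff_mem_evens hS hT', ?_⟩
    rw [key (S ∆ T'), symmDiff_symmDiff_cancel_left]
    exact hdist

lemma flip_preimage_A {δ' r' : ℝ} {S : Finset (Fin d)} (hS : S ∈ evens d) :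
    flip S ⁻¹' (cube d ∩ ⋃ T ∈ evens d, closedBall (flip T (const d δ')) r') =
      cube d ∩ ⋃ T ∈ evens d, closedBall (flip T (const d δ')) r' := by
  ext x
  simp only [Set.mem_preimage, Set.mem_inter_iff]
  rw [flip_mem_cube_iff, flip_mem_balls_iff hS]

end Stmt8Aux

theorem stmt8 (d : ℕ) (hd : 2 ≤ d) (δ r : ℝ) (hδ0 : 0 < δ) (hδ1 : δ ≤ 1) (hr : 0 ≤ r) :
    cover d (design d δ) r =
      (1 / 2) *
        (volume ((C0 d ∪ ⋃ j, U d j) ∩ Metric.closedBall (const d δ) r)).toReal := by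
  classical
  have hd1 : 1 ≤ d := by omega
  set c : EuclideanSpace ℝ (Fin d) := const d δ with hc
  set Ub : Set (EuclideanSpace ℝ (Fin d)) :=
    ⋃ T ∈ Stmt8Aux.evens d, Metric.closedBall (Stmt8Aux.flip T c) r with hUb
  set A : Set (EuclideanSpace ℝ (Fin d)) := cube d ∩ Ub with hA
  set V : Set (EuclideanSpace ℝ (Fin d)) := Stmt8Aux.Vset d with hV
  set W : Finset (Fin d) → Set (EuclideanSpace ℝ (Fin d)) :=
    fun S => Stmt8Aux.flip S ⁻¹' V with hW
  set m := volume (V ∩ Metric.closedBall c r) with hm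
  -- rewrite the design union
  have hdesign : (⋃ z ∈ design d δ, Metric.closedBall z r) = Ub := by
    rw [Stmt8Aux.design_eq δ, Set.biUnion_image, hUb]
    simp only [Finset.set_biUnion_coe]
    rfl
  -- measurability
  have hUbmeas : MeasurableSet Ub := by
    rw [hUb]
    exact (Stmt8Aux.evens d).measurableSet_biUnion fun T _ => Metric.isClosed_closedBall.measurableSet
  have hAmeas : MeasurableSet A := Stmt8Aux.measurableSet_cube.inter hUbmeas
  have hWmeas : ∀ S, MeasurableSet (W S) := fun S =>
    Stmt8Aux.measurableSet_Vset.preimage (Stmt8Aux.measurePreserving_flip S).measurable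
  -- covering
  have hcover : A = ⋃ S ∈ Stmt8Aux.evens d, (A ∩ W S) := by
    apply Set.Subset.antisymm
    · intro x hx
      obtain ⟨S, hS, hSV⟩ := Stmt8Aux.exists_flip_mem_V hd1 x hx.1
      exact Set.mem_biUnion hS ⟨hx, hSV⟩
    · exact Set.iUnion₂_subset fun S _ => Set.inter_subset_left
  -- a.e. disjointness
  have hdisj : (↑(Stmt8Aux.evens d) : Set (Finset (Fin d))).Pairwise
      (Function.onFun (MeasureTheory.AEDisjoint volume) (fun S => A ∩ W S)) := by
    intro S hS T hT hST
    refine measure_mono_null ?_ Stmt8Aux.volume_Zbad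
    rintro x ⟨⟨-, hxS⟩, -, hxT⟩
    by_contra hxZ
    rw [Stmt8Aux.Zbad, Set.mem_union, not_or] at hxZ
    obtain ⟨h0', hdist⟩ := hxZ
    have h0 : ∀ i, x i ≠ 0 := fun i hi => h0' ⟨i, hi⟩
    have hdist' : ∀ i k : Fin d, i ≠ k → |x i| ≠ |x k| := fun i k hik hc =>
      hdist ⟨i, k, hik, hc⟩
    exact hST (Stmt8Aux.flip_eq_of_mem_V h0 hdist'
      (Finset.mem_coe.mp hS) (Finset.mem_coe.mp hT) hxS hxT)
  -- measure splits
  have hmeasure : volume A = ∑ S ∈ Stmt8Aux.evens d, volume (A ∩ W S) := by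
    conv_lhs => rw [hcover]
    exact measure_biUnion_finset₀ hdisj
      (fun S _ => (hAmeas.inter (hWmeas S)).nullMeasurableSet)
  -- each piece has the same volume
  have hAV : A ∩ V = V ∩ Metric.closedBall c r := by
    have h1 : A ∩ V = V ∩ Ub := by
      rw [hA]
      ext x
      simp only [Set.mem_inter_iff]
      constructor
      · rintro ⟨⟨-, h2⟩, h3⟩
        exact ⟨h3, h2⟩
      · rintro ⟨h1, h2⟩
        exact ⟨⟨Stmt8Aux.Vset_subset_cube h1, h2⟩, h1⟩
    rw [h1, hUb, hV, hc]
    exact Stmt8Aux.V_inter_balls hδ0 hr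
  have hsame : ∀ S ∈ Stmt8Aux.evens d, volume (A ∩ W S) = m := by
    intro S hS
    have h1 : A ∩ W S = Stmt8Aux.flip S ⁻¹' (V ∩ Metric.closedBall c r) := by
      rw [← hAV, Set.preimage_inter]
      congr 1
      rw [hA, hUb]
      exact (Stmt8Aux.flip_preimage_A hS).symm
    rw [h1, hm]
    exact (Stmt8Aux.measurePreserving_flip S).measure_preimage
      (Stmt8Aux.measurableSet_Vset.inter Metric.isClosed_closedBall.measurableSet).nullMeasurableSet
  have htotal : volume A = (2 ^ (d - 1) : ℕ) * m := by
    rw [hmeasure, Finset.sum_congr rfl hsame, Finset.sum_const,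
      Stmt8Aux.card_evens hd1, nsmul_eq_mul]
  -- finiteness
  have hmne : m ≠ ⊤ := by
    refine ne_top_of_le_ne_top (measure_closedBall_lt_top).ne
      (measure_mono Set.inter_subset_right)
  -- conclusion
  show (volume (cube d ∩ ⋃ z ∈ design d δ, Metric.closedBall z r)).toReal / 2 ^ d = _
  rw [hdesign, ← hA, htotal]
  have hVeq : (C0 d ∪ ⋃ j, U d j) = V := rfl
  rw [hVeq, ← hm]
  rw [ENNReal.toReal_mul]
  simp only [ENNReal.toReal_natCast]
  push_cast
  have h2 : (2:ℝ) ^ d = 2 ^ (d - 1) * 2 := by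
    rw [← pow_succ]
    congr 1
    omega
  rw [h2]
  have hpos : (0:ℝ) < 2 ^ (d-1) := by positivity
  field_simp

end
end

section
/- Let d ≥ 2, 0 < δ ≤ 1, and 0 ≤ r ≤ δ. Then C_d(D(d,δ), r) = (1/2)·C_{d,(2δ−1)·1, 2r}. -/
open MeasureTheory Filter
open scoped symmDiff

noncomputable section

namespace Stmt9Aux

def zpt (d : ℕ) (δ : ℝ) (A : Finset (Fin d)) : EuclideanSpace ℝ (Fin d) :=
  WithLp.toLp 2 (fun i => δ * (if i ∈ A then -1 else 1))

lemma measurableSet_cube (d : ℕ) : MeasurableSet (cube d) := by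
  have : cube d = ⋂ i, (EuclideanSpace.proj (𝕜 := ℝ) i) ⁻¹' Set.Icc (-1 : ℝ) 1 := by
    ext x; simp [cube]
  rw [this]
  exact MeasurableSet.iInter fun i =>
    ((EuclideanSpace.proj (𝕜 := ℝ) i).continuous.measurable) measurableSet_Icc

lemma card_symmDiff_identity {d : ℕ} (A B : Finset (Fin d)) :
    (A ∆ B).card + (A ∩ B).card + (A ∩ B).card = A.card + B.card := by
  have h1 : (A ∆ B).card = (A \ B).card + (B \ A).card := by
    rw [symmDiff_def]
    exact Finset.card_union_of_disjoint disjoint_sdiff_sdiff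
  have h2 := Finset.card_sdiff_add_card_inter A B
  have h3 := Finset.card_sdiff_add_card_inter B A
  rw [Finset.inter_comm B A] at h3
  omega

lemma coord_le_dist {d : ℕ} (x y : EuclideanSpace ℝ (Fin d)) (i : Fin d) :
    |x i - y i| ≤ dist x y := by
  rw [EuclideanSpace.dist_eq, ← Real.sqrt_sq_eq_abs]
  apply Real.sqrt_le_sqrt
  have h : (x i - y i) ^ 2 = dist (x i) (y i) ^ 2 := by rw [Real.dist_eq, sq_abs]
  rw [h]
  exact Finset.single_le_sum (f := fun j => dist (x j) (y j) ^ 2)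
    (fun j _ => sq_nonneg _) (Finset.mem_univ i)


lemma even_symmDiff {d : ℕ} {A B : Finset (Fin d)} (hA : Even A.card) (hB : Even B.card) :
    Even (A ∆ B).card := by
  have := card_symmDiff_identity A B
  rw [Nat.even_iff] at hA hB ⊢
  omega

lemma card_evens {d : ℕ} (hd : 1 ≤ d) :
    (Finset.univ.filter fun A : Finset (Fin d) => Even A.card).card = 2 ^ (d - 1) := by
  set i₀ : Fin d := ⟨0, hd⟩
  have key : ∀ A : Finset (Fin d), Even ((A ∆ {i₀}).card) ↔ ¬ Even A.card := by
    intro A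
    have := card_symmDiff_identity A {i₀}
    simp only [Finset.card_singleton] at this
    rw [Nat.even_iff, Nat.even_iff]
    omega
  have hbij : (Finset.univ.filter fun A : Finset (Fin d) => Even A.card).card
      = (Finset.univ.filter fun A : Finset (Fin d) => ¬ Even A.card).card := by
    refine Finset.card_bij' (fun A _ => A ∆ {i₀}) (fun A _ => A ∆ {i₀}) ?_ ?_ ?_ ?_
    · intro A hA
      simp only [Finset.mem_filter, Finset.mem_univ, true_and] at hA ⊢
      rw [key A]
      simpa using hA
    · intro A hA
      simp only [Finset.mem_filter, Finset.mem_univ, true_and] at hA ⊢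
      have h2 := key (A ∆ {i₀})
      rw [symmDiff_symmDiff_cancel_right] at h2
      tauto
    · intro A _
      exact symmDiff_symmDiff_cancel_right {i₀} A
    · intro A _
      exact symmDiff_symmDiff_cancel_right {i₀} A
  have htot := Finset.card_filter_add_card_filter_not
    (s := (Finset.univ : Finset (Finset (Fin d)))) (p := fun A => Even A.card)
  have hcard : (Finset.univ : Finset (Finset (Fin d))).card = 2 ^ d := by
    simp [Fintype.card_finset]
  have h2 : 2 ^ d = 2 * 2 ^ (d - 1) := by
    rw [← pow_succ']
    congr 1
    omega
  omega

lemma design_eq {d : ℕ} (δ : ℝ) :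
    design d δ = zpt d δ '' {A : Finset (Fin d) | Even A.card} := by
  ext z
  constructor
  · rintro ⟨ε, hε, hev, hz⟩
    refine ⟨Finset.univ.filter fun i => ε i = -1, ?_, ?_⟩
    · have hset : {i | ε i = -1} = ↑(Finset.univ.filter fun i => ε i = -1) := by
        ext i; simp
      rwa [hset, Set.ncard_coe_finset] at hev
    · ext i
      rw [hz]
      rcases hε i with h | h <;> simp [zpt, h] <;> norm_num [h]
  · rintro ⟨A, hA, rfl⟩
    refine ⟨fun i => if i ∈ A then -1 else 1, fun i => ?_, ?_, rfl⟩
    · by_cases h : i ∈ A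
      · exact Or.inr (by simp [h])
      · exact Or.inl (by simp [h])
    have hset : {i | (if i ∈ A then (-1 : ℝ) else 1) = -1} = ↑A := by
      ext i; by_cases h : i ∈ A <;> simp [h, show (1:ℝ) ≠ -1 by norm_num]
    rwa [hset, Set.ncard_coe_finset]


lemma balls_disjoint {d : ℕ} {δ r : ℝ} (hδ0 : 0 < δ) (hr0 : 0 ≤ r) (hr1 : r ≤ δ)
    {A B : Finset (Fin d)} (hA : Even A.card) (hB : Even B.card) (hAB : A ≠ B) :
    Disjoint (Metric.closedBall (zpt d δ A) r) (Metric.closedBall (zpt d δ B) r) := by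
  apply Metric.closedBall_disjoint_closedBall
  have hsum : ∑ i, dist (zpt d δ A i) (zpt d δ B i) ^ 2 = (A ∆ B).card * (4 * δ ^ 2) := by
    have hterm : ∀ i, dist (zpt d δ A i) (zpt d δ B i) ^ 2
        = if i ∈ A ∆ B then 4 * δ ^ 2 else 0 := by
      intro i
      rw [Real.dist_eq, sq_abs]
      by_cases hiA : i ∈ A <;> by_cases hiB : i ∈ B <;>
        simp [zpt, hiA, hiB, Finset.mem_symmDiff] <;> ring
    rw [Finset.sum_congr rfl fun i _ => hterm i, Finset.sum_ite_mem, Finset.univ_inter,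
      Finset.sum_const, nsmul_eq_mul]
  have hcard : 2 ≤ (A ∆ B).card := by
    have hev := even_symmDiff hA hB
    have hne : (A ∆ B).card ≠ 0 := by
      simp only [ne_eq, Finset.card_eq_zero]
      intro h
      exact hAB (symmDiff_eq_bot.mp (by simpa using h))
    rcases hev with ⟨k, hk⟩
    omega
  rw [EuclideanSpace.dist_eq, hsum]
  rw [Real.lt_sqrt (by linarith)]
  have : (8 : ℝ) * δ ^ 2 ≤ (A ∆ B).card * (4 * δ ^ 2) := by
    have : (2 : ℝ) ≤ ((A ∆ B).card : ℝ) := by exact_mod_cast hcard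
    nlinarith [sq_nonneg δ]
  nlinarith

lemma flip_vol {d : ℕ} (δ r : ℝ) (A : Finset (Fin d)) :
    volume (cube d ∩ Metric.closedBall (zpt d δ A) r)
      = volume (cube d ∩ Metric.closedBall (zpt d δ ∅) r) := by
  classical
  set L : EuclideanSpace ℝ (Fin d) ≃ₗᵢ[ℝ] EuclideanSpace ℝ (Fin d) :=
    LinearIsometryEquiv.piLpCongrRight 2
      (fun i : Fin d => if i ∈ A then LinearIsometryEquiv.neg ℝ else LinearIsometryEquiv.refl ℝ ℝ)
    with hL
  have hLapp : ∀ (x : EuclideanSpace ℝ (Fin d)) (i : Fin d),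
      L x i = if i ∈ A then -x i else x i := by
    intro x i
    by_cases h : i ∈ A <;> simp [hL, h]
  have hpre : L ⁻¹' (cube d ∩ Metric.closedBall (zpt d δ A) r)
      = cube d ∩ Metric.closedBall (zpt d δ ∅) r := by
    ext x
    simp only [Set.mem_preimage, Set.mem_inter_iff, Metric.mem_closedBall]
    have hdist : dist (L x) (zpt d δ A) = dist x (zpt d δ ∅) := by
      rw [EuclideanSpace.dist_eq, EuclideanSpace.dist_eq]
      congr 1
      apply Finset.sum_congr rfl
      intro i _
      rw [hLapp, Real.dist_eq, Real.dist_eq, sq_abs, sq_abs]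
      by_cases h : i ∈ A <;> simp [zpt, h] <;> ring
    have hcube : L x ∈ cube d ↔ x ∈ cube d := by
      simp only [cube, Set.mem_setOf_eq, Set.mem_Icc]
      constructor <;> intro hx i <;> have := hx i <;> rw [hLapp] at * <;>
        by_cases h : i ∈ A <;> simp [h] at this ⊢ <;> constructor <;> linarith [this.1, this.2]
    rw [hdist, hcube]
  calc volume (cube d ∩ Metric.closedBall (zpt d δ A) r)
      = volume (L ⁻¹' (cube d ∩ Metric.closedBall (zpt d δ A) r)) := by
        rw [L.measurePreserving.measure_preimage
          ((measurableSet_cube d).inter measurableSet_closedBall).nullMeasurableSet]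
    _ = _ := by rw [hpre]


lemma scale_vol {d : ℕ} {δ r : ℝ} (hr1 : r ≤ δ) :
    volume (cube d ∩ Metric.closedBall (const d δ) r)
      = ENNReal.ofReal ((2 : ℝ) ^ d)⁻¹
          * volume (cube d ∩ Metric.closedBall (const d (2 * δ - 1)) (2 * r)) := by
  set S := cube d ∩ Metric.closedBall (const d (2 * δ - 1)) (2 * r) with hS
  set v : EuclideanSpace ℝ (Fin d) := const d (-1) with hv
  have hyi : ∀ (x : EuclideanSpace ℝ (Fin d)) (i : Fin d),
      ((2 : ℝ) • x + v) i = 2 * x i - 1 := by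
    intro x i
    simp only [PiLp.add_apply, PiLp.smul_apply, smul_eq_mul, hv, const, PiLp.toLp_apply]
    ring
  have hpre : ((2 : ℝ) • ·) ⁻¹' ((· + v) ⁻¹' S)
      = cube d ∩ Metric.closedBall (const d δ) r := by
    ext x
    simp only [Set.mem_preimage, hS, Set.mem_inter_iff, Metric.mem_closedBall, cube,
      Set.mem_setOf_eq, Set.mem_Icc]
    have hdist : dist ((2 : ℝ) • x + v) (const d (2 * δ - 1)) = 2 * dist x (const d δ) := by
      have h4 : ∀ i : Fin d, dist (((2 : ℝ) • x + v) i) (const d (2 * δ - 1) i) ^ 2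
          = 4 * dist (x i) (const d δ i) ^ 2 := by
        intro i
        simp only [Real.dist_eq, sq_abs, hyi, const, PiLp.toLp_apply]
        ring
      rw [EuclideanSpace.dist_eq, EuclideanSpace.dist_eq,
        Finset.sum_congr rfl (fun i _ => h4 i), ← Finset.mul_sum,
        Real.sqrt_mul (by norm_num),
        show Real.sqrt 4 = 2 by
          rw [show (4 : ℝ) = 2 ^ 2 by norm_num, Real.sqrt_sq (by norm_num)]]
    rw [hdist]
    constructor
    · rintro ⟨h1, h2⟩
      refine ⟨fun i => ?_, by linarith⟩
      have := h1 i
      rw [hyi] at this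
      exact ⟨by linarith [this.1], by linarith [this.2]⟩
    · rintro ⟨h1, h2⟩
      refine ⟨fun i => ?_, by linarith⟩
      have hc := coord_le_dist x (const d δ) i
      have hcδ : const d δ i = δ := rfl
      rw [hcδ] at hc
      have habs := abs_le.mp (hc.trans h2)
      rw [hyi]
      exact ⟨by linarith [habs.1], by linarith [(h1 i).2]⟩
  have hmeas : volume (((2 : ℝ) • ·) ⁻¹' ((· + v) ⁻¹' S))
      = ENNReal.ofReal ((2 : ℝ) ^ d)⁻¹ * volume S := by
    rw [Measure.addHaar_preimage_smul volume (two_ne_zero) ((· + v) ⁻¹' S),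
      measure_preimage_add_right]
    congr 2
    rw [finrank_euclideanSpace_fin]
    rw [abs_of_pos (by positivity)]
  rw [← hpre, hmeas]

end Stmt9Aux

open Stmt9Aux

theorem stmt9 (d : ℕ) (hd : 2 ≤ d) (δ r : ℝ) (hδ0 : 0 < δ) (hδ1 : δ ≤ 1)
    (hr0 : 0 ≤ r) (hr1 : r ≤ δ) :
    cover d (design d δ) r = (1 / 2) * coverOne d (const d (2 * δ - 1)) (2 * r) := by
  classical
  have hd1 : 1 ≤ d := by omega
  set E := Finset.univ.filter fun A : Finset (Fin d) => Even A.card with hE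
  have hEset : {A : Finset (Fin d) | Even A.card} = ↑E := by
    ext A; simp [hE]
  have hunion : cube d ∩ ⋃ z ∈ design d δ, Metric.closedBall z r
      = ⋃ A ∈ E, (cube d ∩ Metric.closedBall (zpt d δ A) r) := by
    rw [design_eq δ, hEset, Set.biUnion_image, Set.inter_iUnion₂]
    simp
  have hvol : volume (⋃ A ∈ E, (cube d ∩ Metric.closedBall (zpt d δ A) r))
      = ∑ A ∈ E, volume (cube d ∩ Metric.closedBall (zpt d δ A) r) := by
    apply measure_biUnion_finset
    · intro A hA B hB hAB
      simp only [hE, Finset.coe_filter, Finset.mem_univ, true_and,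
        Set.mem_setOf_eq] at hA hB
      exact Disjoint.mono Set.inter_subset_right Set.inter_subset_right
        (balls_disjoint hδ0 hr0 hr1 hA hB hAB)
    · intro A _
      exact (measurableSet_cube d).inter measurableSet_closedBall
  have hz0 : zpt d δ (∅ : Finset (Fin d)) = const d δ := by
    ext i; simp [zpt, const]
  have hsum : ∑ A ∈ E, volume (cube d ∩ Metric.closedBall (zpt d δ A) r)
      = E.card • volume (cube d ∩ Metric.closedBall (const d δ) r) := by
    rw [Finset.sum_congr rfl fun A _ => flip_vol δ r A, Finset.sum_const, hz0]
  set V2 := volume (cube d ∩ Metric.closedBall (const d (2 * δ - 1)) (2 * r)) with hV2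
  have hV2top : V2 ≠ ⊤ := ((measure_mono Set.inter_subset_right).trans_lt
    measure_closedBall_lt_top).ne
  have hcard : E.card = 2 ^ (d - 1) := card_evens hd1
  rw [cover, coverOne, hunion, hvol, hsum, scale_vol hr1, ← hV2, hcard]
  rw [nsmul_eq_mul, ENNReal.toReal_mul, ENNReal.toReal_mul, ENNReal.toReal_natCast,
    ENNReal.toReal_ofReal (by positivity)]
  have h2d : (2 : ℝ) ^ d = 2 * 2 ^ (d - 1) := by
    rw [← pow_succ']
    congr 1
    omega
  push_cast
  rw [h2d]
  have hpos : (0:ℝ) < 2 ^ (d-1) := by positivity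
  field_simp

end
end
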